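/- arXiv:1207.3848 — 14 statements merged into one kernel-verified Lean document; each statement's English description precedes it below -/
import Mathlib

section
/- If M : J × J' → H is G-permutable, i.e., G : J × J' → J is comonotonic with M and M(G(x,s),t) = M(G(x,t),s) for all x ∈ J and s,t ∈ J', then G is itself permutable: G(G(x,s),t) = G(G(x,t),s) for all x ∈ J and s,t ∈ J'. -/
/-- `J` is a nonempty nondegenerate interval of nonnegative reals. -/
def NondegNonnegInterval (J : Set ℝ) : Prop :=
  J.OrdConnected ∧ (∃ a ∈ J, ∃ b ∈ J, a ≠ b) ∧ ∀ x ∈ J, 0 ≤ x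

/-- `M : J × J' → H` and `G : J × J' → H'` are comonotonic. -/
def Comonotonic (J J' : Set ℝ) (M G : ℝ → ℝ → ℝ) : Prop :=
  ∀ x ∈ J, ∀ y ∈ J, ∀ s ∈ J', ∀ t ∈ J', (M x s ≤ M y t ↔ G x s ≤ G y t)

/-- If `M : J × J' → H` is `G`-permutable, i.e. `G : J × J' → J` is comonotonic with `M`
and `M(G(x,s),t) = M(G(x,t),s)` for all `x ∈ J`, `s,t ∈ J'`, then `G` is permutable. -/
theorem G_permutable_of_M_G_permutable (J J' H : Set ℝ) (M G : ℝ → ℝ → ℝ)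
    (hJ : NondegNonnegInterval J) (hJ' : NondegNonnegInterval J')
    (hH : NondegNonnegInterval H)
    (hM : ∀ x ∈ J, ∀ s ∈ J', M x s ∈ H)
    (hG : ∀ x ∈ J, ∀ s ∈ J', G x s ∈ J)
    (hcom : Comonotonic J J' M G)
    (hperm : ∀ x ∈ J, ∀ s ∈ J', ∀ t ∈ J', M (G x s) t = M (G x t) s) :
    ∀ x ∈ J, ∀ s ∈ J', ∀ t ∈ J', G (G x s) t = G (G x t) s := by
  intro x hx s hs t ht
  have h1 := hG x hx s hs
  have h2 := hG x hx t ht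
  have heq := hperm x hx s hs t ht
  have hle := (hcom _ h1 _ h2 _ ht _ hs).mp heq.le
  have hge := (hcom _ h2 _ h1 _ hs _ ht).mp heq.ge
  exact le_antisymm hle hge
end

section
/- Let G : J × J' → J be a solvable permutable code that is x₀-solvable, and define the operation ∙ on J by x ∙ y = G(x,v) where v is the unique element of J' with G(x₀,v) = y. Then ∙ is commutative: x ∙ y = y ∙ x for all x,y ∈ J. -/
/-- A (numerical) code `G : J × J' → H`: onto `H`, strictly increasing in the first
variable, strictly monotonic in the second, and continuous in both. -/
def IsCode (J J' H : Set ℝ) (G : ℝ → ℝ → ℝ) : Prop :=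
  (∀ x ∈ J, ∀ s ∈ J', G x s ∈ H) ∧
  (∀ p ∈ H, ∃ x ∈ J, ∃ s ∈ J', G x s = p) ∧
  (∀ s ∈ J', StrictMonoOn (fun x => G x s) J) ∧
  ((∀ x ∈ J, StrictMonoOn (fun s => G x s) J') ∨
    (∀ x ∈ J, StrictAntiOn (fun s => G x s) J')) ∧
  (∀ s ∈ J', ContinuousOn (fun x => G x s) J) ∧
  (∀ x ∈ J, ContinuousOn (fun s => G x s) J')

/-- Solvability condition [S1]: if `G(x,t) < p ∈ H`, there is `w ∈ J` with `G(w,t) = p`. -/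
def SolvS1 (J J' H : Set ℝ) (G : ℝ → ℝ → ℝ) : Prop :=
  ∀ x ∈ J, ∀ t ∈ J', ∀ p ∈ H, G x t < p → ∃ w ∈ J, G w t = p

/-- Solvability condition [S2]: `G` is `x₀`-solvable, i.e. for every `p ∈ H` there is
`v ∈ J'` with `G(x₀,v) = p`. -/
def X0Solvable (J J' H : Set ℝ) (G : ℝ → ℝ → ℝ) (x₀ : ℝ) : Prop :=
  x₀ ∈ J ∧ ∀ p ∈ H, ∃ v ∈ J', G x₀ v = p

/-- `G` is permutable: `G(G(x,s),t) = G(G(x,t),s)`. -/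
def Permutable (J J' : Set ℝ) (G : ℝ → ℝ → ℝ) : Prop :=
  ∀ x ∈ J, ∀ s ∈ J', ∀ t ∈ J', G (G x s) t = G (G x t) s

/-- For a solvable permutable code `G`, the operation `x ∙ y = G(x,v)` (where
`G(x₀,v) = y`) is commutative. -/
theorem bullet_comm (J J' : Set ℝ) (G : ℝ → ℝ → ℝ) (x₀ : ℝ) (bull : ℝ → ℝ → ℝ)
    (hJ : NondegNonnegInterval J) (hJ' : NondegNonnegInterval J')
    (hcode : IsCode J J' J G)
    (hS1 : SolvS1 J J' J G) (hS2 : X0Solvable J J' J G x₀)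
    (hperm : Permutable J J' G)
    (hbull : ∀ x ∈ J, ∀ y ∈ J, ∀ v ∈ J', G x₀ v = y → bull x y = G x v) :
    ∀ x ∈ J, ∀ y ∈ J, bull x y = bull y x := by
  intro x hx y hy
  obtain ⟨hx0, hsol⟩ := hS2
  obtain ⟨vx, hvx, hvxe⟩ := hsol x hx
  obtain ⟨vy, hvy, hvye⟩ := hsol y hy
  rw [hbull x hx y hy vy hvy hvye, hbull y hy x hx vx hvx hvxe]
  have := hperm x₀ hx0 vx hvx vy hvy
  rw [hvxe, hvye] at this
  exact this
end

section
/- Let G : J × J' → J be a solvable permutable code that is x₀-solvable, and define the operation ∙ on J by x ∙ y = G(x,v) where v is the unique element of J' with G(x₀,v) = y. Then ∙ is associative: x ∙ (y ∙ z) = (x ∙ y) ∙ z for all x,y,z ∈ J. -/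
/-- For a solvable permutable code `G`, the operation `x ∙ y = G(x,v)` (where
`G(x₀,v) = y`) is associative. -/
theorem bullet_assoc (J J' : Set ℝ) (G : ℝ → ℝ → ℝ) (x₀ : ℝ) (bull : ℝ → ℝ → ℝ)
    (hJ : NondegNonnegInterval J) (hJ' : NondegNonnegInterval J')
    (hcode : IsCode J J' J G)
    (hS1 : SolvS1 J J' J G) (hS2 : X0Solvable J J' J G x₀)
    (hperm : Permutable J J' G)
    (hbull : ∀ x ∈ J, ∀ y ∈ J, ∀ v ∈ J', G x₀ v = y → bull x y = G x v) :
    ∀ x ∈ J, ∀ y ∈ J, ∀ z ∈ J, bull x (bull y z) = bull (bull x y) z := by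
  obtain ⟨hx₀, hsolv⟩ := hS2
  have hmem := hcode.1
  intro x hx y hy z hz
  obtain ⟨s, hs, hxs⟩ := hsolv x hx
  obtain ⟨u, hu, hyu⟩ := hsolv y hy
  obtain ⟨v, hv, hzv⟩ := hsolv z hz
  -- bull y z = G y v ∈ J
  have hyz : bull y z = G y v := hbull y hy z hz v hv hzv
  have hyvJ : G y v ∈ J := hmem y hy v hv
  -- pick w with G x₀ w = G y v
  obtain ⟨w, hw, hww⟩ := hsolv (G y v) hyvJ
  have hbyzJ : bull y z ∈ J := hyz ▸ hyvJ
  have hL : bull x (bull y z) = G x w :=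
    hbull x hx (bull y z) hbyzJ w hw (by rw [hww, hyz])
  -- bull x y = G x u = G y s
  have hxy : bull x y = G x u := hbull x hx y hy u hu hyu
  have hxu : G x u = G y s := by
    rw [← hxs, ← hyu]
    exact hperm x₀ hx₀ s hs u hu
  have hbxyJ : bull x y ∈ J := by rw [hxy, hxu]; exact hmem y hy s hs
  have hR : bull (bull x y) z = G (G y s) v := by
    rw [hbull (bull x y) hbxyJ z hz v hv hzv, hxy, hxu]
  -- G x w = G (G y v) s
  have hxw : G x w = G (G y v) s := by
    rw [← hxs, hperm x₀ hx₀ s hs w hw, hww]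
  rw [hL, hR, hxw, hperm y hy s hs v hv]
end

section
/- Let G : J × J' → J be a solvable permutable code that is x₀-solvable, and define the operation ∙ on J by x ∙ y = G(x,v) where v is the unique element of J' with G(x₀,v) = y. Then for all x,y,y',z,z',w ∈ J: if y ∙ x = w ∙ z and w ∙ y' = z' ∙ x, then y ∙ y' = z' ∙ z. -/
/-- For a solvable permutable code `G`, the operation `x ∙ y = G(x,v)` (where
`G(x₀,v) = y`) satisfies the cancellation-type condition (ii):
if `y ∙ x = w ∙ z` and `w ∙ y' = z' ∙ x` then `y ∙ y' = z' ∙ z`. -/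
theorem bullet_condition_ii (J J' : Set ℝ) (G : ℝ → ℝ → ℝ) (x₀ : ℝ) (bull : ℝ → ℝ → ℝ)
    (hJ : NondegNonnegInterval J) (hJ' : NondegNonnegInterval J')
    (hcode : IsCode J J' J G)
    (hS1 : SolvS1 J J' J G) (hS2 : X0Solvable J J' J G x₀)
    (hperm : Permutable J J' G)
    (hbull : ∀ x ∈ J, ∀ y ∈ J, ∀ v ∈ J', G x₀ v = y → bull x y = G x v) :
    ∀ x ∈ J, ∀ y ∈ J, ∀ y' ∈ J, ∀ z ∈ J, ∀ z' ∈ J, ∀ w ∈ J,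
      bull y x = bull w z → bull w y' = bull z' x → bull y y' = bull z' z := by
  intro x hx y hy y' hy' z hz z' hz' w hw h1 h2
  obtain ⟨vx, hvx, hvxe⟩ := hS2.2 x hx
  obtain ⟨vy', hvy', hvy'e⟩ := hS2.2 y' hy'
  obtain ⟨vz, hvz, hvze⟩ := hS2.2 z hz
  have hGJ := hcode.1
  have h1' : G y vx = G w vz := by
    rw [← hbull y hy x hx vx hvx hvxe, ← hbull w hw z hz vz hvz hvze]; exact h1
  have h2' : G w vy' = G z' vx := by
    rw [← hbull w hw y' hy' vy' hvy' hvy'e, ← hbull z' hz' x hx vx hvx hvxe]; exact h2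
  have key : G (G y vy') vx = G (G z' vz) vx := by
    calc G (G y vy') vx = G (G y vx) vy' := (hperm y hy vx hvx vy' hvy').symm
      _ = G (G w vz) vy' := by rw [h1']
      _ = G (G w vy') vz := hperm w hw vz hvz vy' hvy'
      _ = G (G z' vx) vz := by rw [h2']
      _ = G (G z' vz) vx := hperm z' hz' vx hvx vz hvz
  have hinj := (hcode.2.2.1 vx hvx).injOn
  have heq : G y vy' = G z' vz :=
    hinj (hGJ y hy vy' hvy') (hGJ z' hz' vz hvz) key
  rw [hbull y hy y' hy' vy' hvy' hvy'e, hbull z' hz' z hz vz hvz hvze]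
  exact heq
end

section
/- Let G : J × J' → J be a solvable permutable code that is x₀-solvable, and define the operation ∙ on J by x ∙ y = G(x,v) where v is the unique element of J' with G(x₀,v) = y. Then for all x,y,z ∈ J: if x ∙ y < z, then there exists w ∈ J with x ∙ w = z. -/
/-- For a solvable permutable code `G`, the operation `x ∙ y = G(x,v)` (where
`G(x₀,v) = y`) satisfies the solvability condition (iv):
if `x ∙ y < z` then `x ∙ w = z` for some `w ∈ J`. -/
theorem bullet_solvable (J J' : Set ℝ) (G : ℝ → ℝ → ℝ) (x₀ : ℝ) (bull : ℝ → ℝ → ℝ)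
    (hJ : NondegNonnegInterval J) (hJ' : NondegNonnegInterval J')
    (hcode : IsCode J J' J G)
    (hS1 : SolvS1 J J' J G) (hS2 : X0Solvable J J' J G x₀)
    (hperm : Permutable J J' G)
    (hbull : ∀ x ∈ J, ∀ y ∈ J, ∀ v ∈ J', G x₀ v = y → bull x y = G x v) :
    ∀ x ∈ J, ∀ y ∈ J, ∀ z ∈ J, bull x y < z → ∃ w ∈ J, bull x w = z := by
  intro x hx y hy z hz hlt
  obtain ⟨hx₀, hS2'⟩ := hS2
  obtain ⟨v, hv, hGv⟩ := hS2' y hy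
  obtain ⟨vx, hvx, hGvx⟩ := hS2' x hx
  have hxy : bull x y = G x v := hbull x hx y hy v hv hGv
  have hswap : G x v = G y vx := by
    calc G x v = G (G x₀ vx) v := by rw [hGvx]
    _ = G (G x₀ v) vx := hperm x₀ hx₀ vx hvx v hv
    _ = G y vx := by rw [hGv]
  have hlt' : G y vx < z := by rw [← hswap, ← hxy]; exact hlt
  obtain ⟨w, hw, hGw⟩ := hS1 y hy vx hvx z hz hlt'
  obtain ⟨v', hv', hGv'⟩ := hS2' w hw
  refine ⟨w, hw, ?_⟩
  calc bull x w = G x v' := hbull x hx w hw v' hv' hGv'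
  _ = G (G x₀ vx) v' := by rw [hGvx]
  _ = G (G x₀ v') vx := hperm x₀ hx₀ vx hvx v' hv'
  _ = G w vx := by rw [hGv']
  _ = z := hGw
end

section
/- Let G : J × J' → J be a solvable permutable code that is x₀-solvable and strictly decreasing in its second variable, and define the operation ∙ on J by x ∙ y = G(x,v) where v is the unique element of J' with G(x₀,v) = y. Fix x,y ∈ J with x < y, and define the sequence (x_y^n) recursively by x_y^1 = x and, whenever x_y^{n-1} is defined and there exists x' ∈ J with y ∙ x_y^{n-1} = x ∙ x', by x_y^n = x'. Then this sequence is strictly increasing: x_y^{n-1} < x_y^n whenever both terms are defined; in particular x_y^2 = y. -/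
/-- The partial recursive sequence `x_y^n` built from the operation `∙`:
`x_y^1 = x`, and `x_y^n = x'` whenever `x_y^{n-1} = a` is defined and `x' ∈ J`
satisfies `y ∙ a = x ∙ x'`. -/
inductive BulletSeq (J : Set ℝ) (bull : ℝ → ℝ → ℝ) (x y : ℝ) : ℕ → ℝ → Prop
  | one : BulletSeq J bull x y 1 x
  | succ {n : ℕ} {a x' : ℝ} : BulletSeq J bull x y n a → x' ∈ J →
      bull y a = bull x x' → BulletSeq J bull x y (n + 1) x'

/-- For a solvable permutable code `G` strictly decreasing in its second variable,
taking `x < y` in `J`, the sequence `(x_y^n)` is strictly increasing, and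
`x_y^2 = y`. -/
theorem bullet_seq_strictMono (J J' : Set ℝ) (G : ℝ → ℝ → ℝ) (x₀ : ℝ)
    (bull : ℝ → ℝ → ℝ) (x y : ℝ)
    (hJ : NondegNonnegInterval J) (hJ' : NondegNonnegInterval J')
    (hcode : IsCode J J' J G)
    (hdec : ∀ u ∈ J, StrictAntiOn (fun s => G u s) J')
    (hS1 : SolvS1 J J' J G) (hS2 : X0Solvable J J' J G x₀)
    (hperm : Permutable J J' G)
    (hbull : ∀ u ∈ J, ∀ w ∈ J, ∀ v ∈ J', G x₀ v = w → bull u w = G u v)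
    (hx : x ∈ J) (hy : y ∈ J) (hxy : x < y) :
    (∀ n : ℕ, ∀ a b : ℝ, BulletSeq J bull x y n a → BulletSeq J bull x y (n + 1) b →
      a < b) ∧
    (∀ b : ℝ, BulletSeq J bull x y 2 b → b = y) := by
  obtain ⟨hx0J, hS2'⟩ := hS2
  have hmono1 : ∀ s ∈ J', StrictMonoOn (fun x => G x s) J := hcode.2.2.1
  -- bull strictly increasing in second variable
  have hBmono2 : ∀ u ∈ J, ∀ w ∈ J, ∀ w' ∈ J, w < w' → bull u w < bull u w' := by
    intro u hu w hw w' hw' hlt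
    obtain ⟨v, hv, hGv⟩ := hS2' w hw
    obtain ⟨v', hv', hGv'⟩ := hS2' w' hw'
    rw [hbull u hu w hw v hv hGv, hbull u hu w' hw' v' hv' hGv']
    have hvv : v' < v := by
      rcases lt_trichotomy v' v with h | h | h
      · exact h
      · subst h; rw [hGv] at hGv'; linarith
      · have := hdec x₀ hx0J hv hv' h; simp only at this; rw [hGv, hGv'] at this; linarith
    exact hdec u hu hv' hv hvv
  -- bull strictly increasing in first variable
  have hBmono1 : ∀ u ∈ J, ∀ u' ∈ J, ∀ w ∈ J, u < u' → bull u w < bull u' w := by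
    intro u hu u' hu' w hw hlt
    obtain ⟨v, hv, hGv⟩ := hS2' w hw
    rw [hbull u hu w hw v hv hGv, hbull u' hu' w hw v hv hGv]
    exact hmono1 v hv hu hu' hlt
  have hinj2 : ∀ u ∈ J, ∀ w ∈ J, ∀ w' ∈ J, bull u w = bull u w' → w = w' := by
    intro u hu w hw w' hw' h
    rcases lt_trichotomy w w' with hl | hl | hl
    · have := hBmono2 u hu w hw w' hw' hl; linarith
    · exact hl
    · have := hBmono2 u hu w' hw' w hw hl; linarith
  have hcomm : ∀ u ∈ J, ∀ w ∈ J, bull u w = bull w u := by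
    intro u hu w hw
    obtain ⟨vu, hvu, hGvu⟩ := hS2' u hu
    obtain ⟨vw, hvw, hGvw⟩ := hS2' w hw
    rw [hbull u hu w hw vw hvw hGvw, hbull w hw u hu vu hvu hGvu]
    calc G u vw = G (G x₀ vu) vw := by rw [hGvu]
    _ = G (G x₀ vw) vu := hperm x₀ hx0J vu hvu vw hvw
    _ = G w vu := by rw [hGvw]
  have hmem : ∀ n a, BulletSeq J bull x y n a → a ∈ J := by
    intro n a h
    induction h with
    | one => exact hx
    | succ _ hm _ _ => exact hm
  have huniq : ∀ n a a', BulletSeq J bull x y n a → BulletSeq J bull x y n a' → a = a' := by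
    intro n a a' h1 h2
    induction h1 generalizing a' with
    | one =>
      cases h2 with
      | one => rfl
      | succ h _ _ => cases h
    | @succ m c b h hm heq ih =>
      cases h2 with
      | one => cases h
      | @succ _ c' _ h' hm' heq' =>
        have hcc : c = c' := ih c' h'
        subst hcc
        have hcJ := hmem _ _ h
        exact hinj2 x hx b hm a' hm' (heq ▸ heq' ▸ rfl)
  constructor
  · intro n a b h1 h2
    cases h2 with
    | one => cases h1
    | @succ _ c _ h' hbJ heq =>
      have hca : c = a := huniq n c a h' h1
      rw [hca] at heq
      have haJ := hmem _ _ h1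
      have h3 : bull x a < bull x b := by
        rw [← heq]; exact hBmono1 x hx y hy a haJ hxy
      rcases lt_trichotomy a b with hl | hl | hl
      · exact hl
      · subst hl; linarith
      · have := hBmono2 x hx b hbJ a haJ hl; linarith
  · intro b h2
    cases h2 with
    | @succ _ c _ h' hbJ heq =>
      cases h' with
      | succ h _ _ => cases h
      | one =>
        have h3 : bull x y = bull x b := by rw [hcomm x hx y hy]; exact heq
        exact (hinj2 x hx y hy b hbJ h3).symm
end

section
/- Let G : J × J' → J be a solvable permutable code that is x₀-solvable, and define the operation ∙ on J by x ∙ y = G(x,v) where v is the unique element of J' with G(x₀,v) = y. Then for all x,y,z ∈ J with x < y, the set N(x,z;y) = {n ∈ ℕ⁺ : x_y^n is defined and x_y^n ≤ z} is finite, where the sequence (x_y^n) is defined recursively by x_y^1 = x and, whenever x_y^{n-1} is defined and there exists x' ∈ J with y ∙ x_y^{n-1} = x ∙ x', by x_y^n = x'. -/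
/-- For a solvable permutable code `G`, the Archimedean-type condition (v) holds:
for `x < y` in `J` and `z ∈ J`, the set
`N(x,z;y) = {n ∈ ℕ⁺ : x_y^n is defined and x_y^n ≤ z}` is finite. -/
theorem bullet_archimedean (J J' : Set ℝ) (G : ℝ → ℝ → ℝ) (x₀ : ℝ)
    (bull : ℝ → ℝ → ℝ)
    (hJ : NondegNonnegInterval J) (hJ' : NondegNonnegInterval J')
    (hcode : IsCode J J' J G)
    (hS1 : SolvS1 J J' J G) (hS2 : X0Solvable J J' J G x₀)
    (hperm : Permutable J J' G)
    (hbull : ∀ u ∈ J, ∀ w ∈ J, ∀ v ∈ J', G x₀ v = w → bull u w = G u v) :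
    ∀ x ∈ J, ∀ y ∈ J, ∀ z ∈ J, x < y →
      {n : ℕ | 0 < n ∧ ∃ a, BulletSeq J bull x y n a ∧ a ≤ z}.Finite := by
  intro x hx y hy z hz hxy
  by_contra hfin
  have hinf : {n : ℕ | 0 < n ∧ ∃ a, BulletSeq J bull x y n a ∧ a ≤ z}.Infinite := hfin
  obtain ⟨hmem, -, hmono1, hmono2, -, hcont2⟩ := hcode
  obtain ⟨hx₀, hS2'⟩ := hS2
  choose v hvJ' hvG using hS2'
  -- rewrite bull via G
  have hbeq : ∀ u ∈ J, ∀ w, ∀ hw : w ∈ J, bull u w = G u (v w hw) := fun u hu w hw =>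
    hbull u hu w hw (v w hw) (hvJ' w hw) (hvG w hw)
  -- bull strictly increasing in second variable
  have hv_lt : ∀ a, ∀ ha : a ∈ J, ∀ b, ∀ hb : b ∈ J, a < b → ∀ u ∈ J,
      G u (v a ha) < G u (v b hb) := by
    intro a ha b hb hab u hu
    have hGab : G x₀ (v a ha) < G x₀ (v b hb) := by rw [hvG, hvG]; exact hab
    rcases hmono2 with hinc | hanti
    · exact hinc u hu (hvJ' a ha) (hvJ' b hb)
        (((hinc x₀ hx₀).lt_iff_lt (hvJ' a ha) (hvJ' b hb)).mp hGab)
    · exact hanti u hu (hvJ' b hb) (hvJ' a ha)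
        (((hanti x₀ hx₀).lt_iff_gt (hvJ' a ha) (hvJ' b hb)).mp hGab)
  have hbull_snd : ∀ u ∈ J, ∀ a ∈ J, ∀ b ∈ J, a < b → bull u a < bull u b := by
    intro u hu a ha b hb hab
    rw [hbeq u hu a ha, hbeq u hu b hb]
    exact hv_lt a ha b hb hab u hu
  have hkey : ∀ u ∈ J, ∀ a ∈ J, ∀ b ∈ J, bull u a < bull u b → a < b := by
    intro u hu a ha b hb h
    rcases lt_trichotomy a b with h1 | h1 | h1
    · exact h1
    · exact absurd h (by rw [h1]; exact lt_irrefl _)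
    · exact absurd h (not_lt.mpr (le_of_lt (hbull_snd u hu b hb a ha h1)))
  have hinj : ∀ a ∈ J, ∀ b ∈ J, bull x a = bull x b → a = b := by
    intro a ha b hb h
    rcases lt_trichotomy a b with h1 | h1 | h1
    · exact absurd h (ne_of_lt (hbull_snd x hx a ha b hb h1))
    · exact h1
    · exact absurd h.symm (ne_of_lt (hbull_snd x hx b hb a ha h1))
  -- facts about the sequence
  have seq_mem : ∀ n a, BulletSeq J bull x y n a → a ∈ J := by
    intro n a h
    induction h with
    | one => exact hx
    | succ _ hmem' _ _ => exact hmem'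
  have seq_pos : ∀ n a, BulletSeq J bull x y n a → 0 < n := by
    intro n a h
    induction h with
    | one => exact one_pos
    | succ _ _ _ _ => exact Nat.succ_pos _
  have seq_unique : ∀ n a, BulletSeq J bull x y n a → ∀ b, BulletSeq J bull x y n b → a = b := by
    intro n a h
    induction h with
    | one =>
      intro b hb
      cases hb with
      | one => rfl
      | succ hprev _ _ => exact absurd (seq_pos _ _ hprev) (lt_irrefl 0)
    | succ hprev hmem' heq ih =>
      intro b hb
      cases hb with
      | one => exact absurd (seq_pos _ _ hprev) (lt_irrefl 0)
      | succ hprev' hmem'' heq' =>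
        have hab := ih _ hprev'
        rw [hab] at heq
        exact hinj _ hmem' _ hmem'' (heq.symm.trans heq')
  have hstep_bull : ∀ n a b, BulletSeq J bull x y n a → BulletSeq J bull x y (n+1) b →
      bull y a = bull x b := by
    intro n a b ha hb
    cases hb with
    | one => exact absurd (seq_pos _ _ ha) (lt_irrefl 0)
    | succ hprev hmem' heq =>
      have := seq_unique _ _ hprev _ ha
      rw [this] at heq
      exact heq
  have seq_lt : ∀ n a b, BulletSeq J bull x y n a → BulletSeq J bull x y (n+1) b → a < b := by
    intro n a b ha hb
    have heq := hstep_bull n a b ha hb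
    have haJ := seq_mem _ _ ha
    have hbJ := seq_mem _ _ hb
    have h1 : bull x a < bull y a := by
      rw [hbeq x hx a haJ, hbeq y hy a haJ]
      exact hmono1 (v a haJ) (hvJ' a haJ) hx hy hxy
    rw [heq] at h1
    exact hkey x hx a haJ b hbJ h1
  have seq_down : ∀ m c, BulletSeq J bull x y m c → ∀ k, 0 < k → k ≤ m →
      ∃ b, BulletSeq J bull x y k b := by
    intro m c h
    induction h with
    | one =>
      intro k hk hk1
      have : k = 1 := by omega
      subst this
      exact ⟨x, BulletSeq.one⟩
    | succ hprev hmem' heq ih =>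
      intro k hk hkm
      rcases eq_or_lt_of_le hkm with rfl | hlt
      · exact ⟨_, BulletSeq.succ hprev hmem' heq⟩
      · exact ih k hk (by omega)
  have seq_le : ∀ m c, BulletSeq J bull x y m c → ∀ k a, BulletSeq J bull x y k a →
      k ≤ m → a ≤ c := by
    intro m c h
    induction h with
    | one =>
      intro k a hk hkm
      have hk1 : k = 1 := by
        have := seq_pos _ _ hk; omega
      subst hk1
      exact le_of_eq (seq_unique _ _ hk _ BulletSeq.one)
    | @succ m c b hprev hmem' heq ih =>
      intro k a hk hkm
      by_cases hcase : k ≤ m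
      · exact le_trans (ih k a hk hcase)
          (le_of_lt (seq_lt _ _ _ hprev (BulletSeq.succ hprev hmem' heq)))
      · have hkm' : k = m + 1 := by omega
        subst hkm'
        exact le_of_eq (seq_unique _ _ hk _ (BulletSeq.succ hprev hmem' heq))
  -- build the total sequence f
  have hall : ∀ n : ℕ, ∃ a, BulletSeq J bull x y (n+1) a := by
    intro n
    obtain ⟨m, hmS, hmn⟩ := hinf.exists_gt (n+1)
    obtain ⟨-, a, hseq, -⟩ := hmS
    exact seq_down m a hseq (n+1) (by omega) (by omega)
  choose f hf using hall
  have hfJ : ∀ n, f n ∈ J := fun n => seq_mem _ _ (hf n)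
  have hfz : ∀ n, f n ≤ z := by
    intro n
    obtain ⟨m, hmS, hmn⟩ := hinf.exists_gt (n+1)
    obtain ⟨-, b, hseqb, hbz⟩ := hmS
    exact le_trans (seq_le m b hseqb (n+1) (f n) (hf n) hmn.le) hbz
  have hfmono : StrictMono f :=
    strictMono_nat_of_lt_succ (fun n => seq_lt _ _ _ (hf n) (hf (n+1)))
  have hbdd : BddAbove (Set.range f) := ⟨z, by rintro _ ⟨n, rfl⟩; exact hfz n⟩
  have hfL : ∀ n, f n ≤ ⨆ m, f m := fun n => le_ciSup hbdd n
  have hLz : (⨆ m, f m) ≤ z := ciSup_le hfz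
  have hLJ : (⨆ m, f m) ∈ J := hJ.1.out (hfJ 0) hz ⟨hfL 0, hLz⟩
  have hfLlt : ∀ n, f n < ⨆ m, f m :=
    fun n => lt_of_lt_of_le (hfmono (Nat.lt_succ_self n)) (hfL (n+1))
  have htendL : Filter.Tendsto f Filter.atTop (nhds (⨆ m, f m)) :=
    tendsto_atTop_ciSup hfmono.monotone hbdd
  -- the v-sequence
  set vf : ℕ → ℝ := fun n => v (f n) (hfJ n) with hvf_def
  set vL : ℝ := v (⨆ m, f m) hLJ with hvL_def
  have hvfJ' : ∀ n, vf n ∈ J' := fun n => hvJ' _ _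
  have hvLJ' : vL ∈ J' := hvJ' _ _
  have hGvf : ∀ n, G x₀ (vf n) = f n := fun n => hvG _ _
  have hGvL : G x₀ vL = ⨆ m, f m := hvG _ _
  have hvf_tend : Filter.Tendsto vf Filter.atTop (nhds vL) := by
    rcases hmono2 with hinc | hanti
    · have hm : Monotone vf := by
        intro i j hij
        exact ((hinc x₀ hx₀).le_iff_le (hvfJ' i) (hvfJ' j)).mp
          (by rw [hGvf, hGvf]; exact hfmono.monotone hij)
      have hub : ∀ n, vf n ≤ vL := fun n =>
        ((hinc x₀ hx₀).le_iff_le (hvfJ' n) hvLJ').mp (by rw [hGvf, hGvL]; exact hfL n)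
      have hbdd' : BddAbove (Set.range vf) := ⟨vL, by rintro _ ⟨n, rfl⟩; exact hub n⟩
      have htend : Filter.Tendsto vf Filter.atTop (nhds (⨆ n, vf n)) :=
        tendsto_atTop_ciSup hm hbdd'
      have hvsJ' : (⨆ n, vf n) ∈ J' :=
        hJ'.1.out (hvfJ' 0) hvLJ' ⟨le_ciSup hbdd' 0, ciSup_le hub⟩
      have hG1 : Filter.Tendsto (fun n => G x₀ (vf n)) Filter.atTop (nhds (G x₀ (⨆ n, vf n))) :=
        (hcont2 x₀ hx₀ _ hvsJ').tendsto.comp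
          (tendsto_nhdsWithin_iff.mpr ⟨htend, Filter.Eventually.of_forall (fun n => hvfJ' n)⟩)
      have hG2 : Filter.Tendsto (fun n => G x₀ (vf n)) Filter.atTop (nhds (⨆ m, f m)) := by
        have : (fun n => G x₀ (vf n)) = f := funext hGvf
        rw [this]; exact htendL
      have hGeq : G x₀ (⨆ n, vf n) = G x₀ vL := by
        rw [hGvL]; exact tendsto_nhds_unique hG1 hG2
      have : (⨆ n, vf n) = vL := (hinc x₀ hx₀).injOn hvsJ' hvLJ' hGeq
      rwa [this] at htend
    · have hm : Antitone vf := by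
        intro i j hij
        exact ((hanti x₀ hx₀).le_iff_ge (hvfJ' i) (hvfJ' j)).mp
          (by rw [hGvf, hGvf]; exact hfmono.monotone hij)
      have hlb : ∀ n, vL ≤ vf n := fun n =>
        ((hanti x₀ hx₀).le_iff_ge (hvfJ' n) hvLJ').mp (by rw [hGvf, hGvL]; exact hfL n)
      have hbdd' : BddBelow (Set.range vf) := ⟨vL, by rintro _ ⟨n, rfl⟩; exact hlb n⟩
      have htend : Filter.Tendsto vf Filter.atTop (nhds (⨅ n, vf n)) :=
        tendsto_atTop_ciInf hm hbdd'
      have hvsJ' : (⨅ n, vf n) ∈ J' :=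
        hJ'.1.out hvLJ' (hvfJ' 0) ⟨le_ciInf hlb, ciInf_le hbdd' 0⟩
      have hG1 : Filter.Tendsto (fun n => G x₀ (vf n)) Filter.atTop (nhds (G x₀ (⨅ n, vf n))) :=
        (hcont2 x₀ hx₀ _ hvsJ').tendsto.comp
          (tendsto_nhdsWithin_iff.mpr ⟨htend, Filter.Eventually.of_forall (fun n => hvfJ' n)⟩)
      have hG2 : Filter.Tendsto (fun n => G x₀ (vf n)) Filter.atTop (nhds (⨆ m, f m)) := by
        have : (fun n => G x₀ (vf n)) = f := funext hGvf
        rw [this]; exact htendL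
      have hGeq : G x₀ (⨅ n, vf n) = G x₀ vL := by
        rw [hGvL]; exact tendsto_nhds_unique hG1 hG2
      have : (⨅ n, vf n) = vL := (hanti x₀ hx₀).injOn hvsJ' hvLJ' hGeq
      rwa [this] at htend
  -- pass to the limit in y∙fₙ = x∙fₙ₊₁
  have hstepG : ∀ n, G y (vf n) = G x (vf (n+1)) := by
    intro n
    have h1 : bull y (f n) = bull x (f (n+1)) := hstep_bull _ _ _ (hf n) (hf (n+1))
    calc G y (vf n) = bull y (f n) := (hbeq y hy (f n) (hfJ n)).symm
      _ = bull x (f (n+1)) := h1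
      _ = G x (vf (n+1)) := hbeq x hx (f (n+1)) (hfJ (n+1))
  have hty : Filter.Tendsto (fun n => G y (vf n)) Filter.atTop (nhds (G y vL)) :=
    (hcont2 y hy vL hvLJ').tendsto.comp
      (tendsto_nhdsWithin_iff.mpr ⟨hvf_tend, Filter.Eventually.of_forall (fun n => hvfJ' n)⟩)
  have htx : Filter.Tendsto (fun n => G x (vf (n+1))) Filter.atTop (nhds (G x vL)) := by
    have hshift : Filter.Tendsto (fun n => vf (n+1)) Filter.atTop (nhds vL) :=
      hvf_tend.comp (Filter.tendsto_add_atTop_nat 1)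
    exact (hcont2 x hx vL hvLJ').tendsto.comp
      (tendsto_nhdsWithin_iff.mpr ⟨hshift, Filter.Eventually.of_forall (fun n => hvfJ' (n+1))⟩)
  have heqfun : (fun n => G y (vf n)) = fun n => G x (vf (n+1)) := funext hstepG
  rw [heqfun] at hty
  have hfinal : G x vL = G y vL := tendsto_nhds_unique htx hty
  exact (hmono1 vL hvLJ' hx hy hxy).ne hfinal
end

section
/- Let G : J × J' → J be a solvable permutable code that is x₀-solvable, and define the operation ∙ on J by x ∙ y = G(x,v) where v is the unique element of J' with G(x₀,v) = y. Then ∙ is continuous and strictly increasing in both variables. -/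
/-- A strictly monotone function on an ord-connected subset of `ℝ` with ord-connected
image is continuous on that set. -/
lemma strictMonoOn_continuousOn_aux {f : ℝ → ℝ} {s : Set ℝ} (hs : s.OrdConnected)
    (himg : (f '' s).OrdConnected) (hmono : StrictMonoOn f s) : ContinuousOn f s := by
  haveI := hs
  haveI := himg
  set g : s → (f '' s) := fun x => ⟨f x, Set.mem_image_of_mem f x.2⟩ with hg
  have hgm : Monotone g := fun a b hab => by
    change f a ≤ f b
    exact hmono.monotoneOn a.2 b.2 hab
  have hgs : Function.Surjective g := by
    rintro ⟨y, x, hx, rfl⟩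
    exact ⟨⟨x, hx⟩, rfl⟩
  have hgc : Continuous g := hgm.continuous_of_surjective hgs
  rw [continuousOn_iff_continuous_restrict]
  have : s.restrict f = (fun y : (f '' s) => (y : ℝ)) ∘ g := rfl
  rw [show s.domRestrict f = s.restrict f from rfl, this]
  exact continuous_subtype_val.comp hgc

/-- For a solvable permutable code `G`, the operation `x ∙ y = G(x,v)` (where
`G(x₀,v) = y`) is continuous and strictly increasing in both variables. -/
theorem bullet_continuous_strictMono (J J' : Set ℝ) (G : ℝ → ℝ → ℝ) (x₀ : ℝ)
    (bull : ℝ → ℝ → ℝ)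
    (hJ : NondegNonnegInterval J) (hJ' : NondegNonnegInterval J')
    (hcode : IsCode J J' J G)
    (hS1 : SolvS1 J J' J G) (hS2 : X0Solvable J J' J G x₀)
    (hperm : Permutable J J' G)
    (hbull : ∀ x ∈ J, ∀ y ∈ J, ∀ v ∈ J', G x₀ v = y → bull x y = G x v) :
    (∀ y ∈ J, StrictMonoOn (fun x => bull x y) J) ∧
    (∀ x ∈ J, StrictMonoOn (fun y => bull x y) J) ∧
    (∀ y ∈ J, ContinuousOn (fun x => bull x y) J) ∧
    (∀ x ∈ J, ContinuousOn (fun y => bull x y) J) := by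
  obtain ⟨hmem, _hsurj, hmono1, hmono2, hcont1, hcont2⟩ := hcode
  obtain ⟨hx₀J, hsolv⟩ := hS2
  choose v hvJ' hvG using hsolv
  -- bull in terms of G and v
  have hb : ∀ x ∈ J, ∀ y, ∀ hy : y ∈ J, bull x y = G x (v y hy) := fun x hx y hy =>
    hbull x hx y hy _ (hvJ' y hy) (hvG y hy)
  -- uniqueness of v
  have huniq : ∀ w ∈ J', ∀ w' ∈ J', G x₀ w = G x₀ w' → w = w' := by
    intro w hw w' hw' he
    rcases hmono2 with h | h
    · exact (h x₀ hx₀J).injOn hw hw' he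
    · exact (h x₀ hx₀J).injOn hw hw' he
  -- strict monotonicity in the second variable
  have hmono_y : ∀ x ∈ J, StrictMonoOn (fun y => bull x y) J := by
    intro x hx a ha b hbJ hab
    simp only [hb x hx a ha, hb x hx b hbJ]
    rcases hmono2 with h | h
    · have hv : v a ha < v b hbJ := by
        have := (h x₀ hx₀J).lt_iff_lt (hvJ' a ha) (hvJ' b hbJ)
        refine this.mp ?_
        simp only [hvG a ha, hvG b hbJ]
        exact hab
      exact h x hx (hvJ' a ha) (hvJ' b hbJ) hv
    · have hv : v b hbJ < v a ha := by
        have := (h x₀ hx₀J).lt_iff_gt (hvJ' a ha) (hvJ' b hbJ)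
        refine this.mp ?_
        simp only [hvG a ha, hvG b hbJ]
        exact hab
      exact h x hx (hvJ' b hbJ) (hvJ' a ha) hv
  refine ⟨?_, hmono_y, ?_, ?_⟩
  · -- strict monotonicity in the first variable
    intro y hy a ha b hbJ hab
    simp only [hb a ha y hy, hb b hbJ y hy]
    exact hmono1 (v y hy) (hvJ' y hy) ha hbJ hab
  · -- continuity in the first variable
    intro y hy
    exact (hcont1 (v y hy) (hvJ' y hy)).congr fun x hx => hb x hx y hy
  · -- continuity in the second variable
    intro x hx
    apply strictMonoOn_continuousOn_aux hJ.1 _ (hmono_y x hx)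
    constructor
    rintro p ⟨a, ha, rfl⟩ q ⟨b, hbJ, rfl⟩ r hr
    -- find w in J' with G x w = r by the intermediate value theorem
    have hsub : Set.uIcc (v a ha) (v b hbJ) ⊆ J' :=
      hJ'.1.uIcc_subset (hvJ' a ha) (hvJ' b hbJ)
    have hcw : ContinuousOn (fun s => G x s) (Set.uIcc (v a ha) (v b hbJ)) :=
      (hcont2 x hx).mono hsub
    have hrmem : r ∈ Set.uIcc (G x (v a ha)) (G x (v b hbJ)) := by
      apply Set.Icc_subset_uIcc
      simpa only [hb x hx a ha, hb x hx b hbJ] using hr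
    obtain ⟨w, hwmem, hGw⟩ := intermediate_value_uIcc hcw hrmem
    have hwJ' : w ∈ J' := hsub hwmem
    set y := G x₀ w with hy_def
    have hyJ : y ∈ J := hmem x₀ hx₀J w hwJ'
    have hvy : v y hyJ = w := huniq (v y hyJ) (hvJ' y hyJ) w hwJ' (by rw [hvG y hyJ])
    exact ⟨y, hyJ, by simp only [hb x hx y hyJ, hvy]; exact hGw⟩
end

section
/- A solvable code G : J × J' → J is permutable if and only if there exist continuous functions f : J → ℝ and g : J' → ℝ, with f strictly increasing and g strictly monotonic, such that G(y,r) = f⁻¹(f(y) + g(r)) for all y ∈ J and r ∈ J' (in particular f(y) + g(r) lies in the range of f for all such y, r). -/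
open Set Filter Topology

namespace PermCode

/-- A strictly monotone function on a set with ord-connected image
is continuous on the set. -/
lemma contOn_of_strictMonoOn {f : ℝ → ℝ} {s : Set ℝ} (hf : StrictMonoOn f s)
    (hfs : (f '' s).OrdConnected) : ContinuousOn f s := by
  intro a ha
  rw [ContinuousWithinAt]
  refine tendsto_order.2 ⟨?_, ?_⟩
  · intro b hb
    by_cases hc : ∃ c ∈ s, b < f c ∧ f c < f a
    · obtain ⟨c, hcs, h1, h2⟩ := hc
      have hca : c < a := (hf.lt_iff_lt hcs ha).1 h2
      filter_upwards [mem_nhdsWithin_of_mem_nhds (Ioi_mem_nhds hca),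
        self_mem_nhdsWithin] with x hx hxs
      rcases le_or_gt a x with hle | hlt
      · exact lt_of_lt_of_le hb (hf.monotoneOn ha hxs hle)
      · exact lt_of_lt_of_le h1 (le_of_lt ((hf.lt_iff_lt hcs hxs).2 hx))
    · push_neg at hc
      have key : ∀ x ∈ s, f a ≤ f x := by
        intro x hx
        by_contra hlt
        push_neg at hlt
        rcases lt_or_ge b (f x) with h | h
        · exact absurd hlt (not_lt.2 (hc x hx h))
        · have hmem : (b + f a) / 2 ∈ f '' s := by
            apply hfs.out ⟨x, hx, rfl⟩ ⟨a, ha, rfl⟩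
            constructor
            · linarith
            · linarith
          obtain ⟨c, hcs, hfc⟩ := hmem
          have h1 : b < f c := by rw [hfc]; linarith
          have h2 : f c < f a := by rw [hfc]; linarith
          exact absurd h2 (not_lt.2 (hc c hcs h1))
      filter_upwards [self_mem_nhdsWithin] with x hxs
      exact lt_of_lt_of_le hb (key x hxs)
  · intro b hb
    by_cases hc : ∃ c ∈ s, f a < f c ∧ f c < b
    · obtain ⟨c, hcs, h1, h2⟩ := hc
      have hac : a < c := (hf.lt_iff_lt ha hcs).1 h1
      filter_upwards [mem_nhdsWithin_of_mem_nhds (Iio_mem_nhds hac),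
        self_mem_nhdsWithin] with x hx hxs
      rcases le_or_gt x a with hle | hlt
      · exact lt_of_le_of_lt (hf.monotoneOn hxs ha hle) hb
      · exact lt_of_le_of_lt (le_of_lt ((hf.lt_iff_lt hxs hcs).2 hx)) h2
    · push_neg at hc
      have key : ∀ x ∈ s, f x ≤ f a := by
        intro x hx
        by_contra hlt
        push_neg at hlt
        rcases lt_or_ge (f x) b with h | h
        · have := hc x hx hlt; exact absurd h (not_lt.2 this)
        · have hmem : (f a + b) / 2 ∈ f '' s := by
            apply hfs.out ⟨a, ha, rfl⟩ ⟨x, hx, rfl⟩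
            constructor
            · linarith
            · linarith
          obtain ⟨c, hcs, hfc⟩ := hmem
          have h1 : f a < f c := by rw [hfc]; linarith
          have h2 : f c < b := by rw [hfc]; linarith
          exact absurd h2 (not_lt.2 (hc c hcs h1))
      filter_upwards [self_mem_nhdsWithin] with x hxs
      exact lt_of_le_of_lt (key x hxs) hb

lemma tendsto_div_two_pow (c : ℝ) : Tendsto (fun n : ℕ => c / 2 ^ n) atTop (𝓝 0) := by
  have := tendsto_pow_atTop_nhds_zero_of_lt_one
    (show (0:ℝ) ≤ 1/2 by norm_num) (show (1:ℝ)/2 < 1 by norm_num)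
  have h2 := this.const_mul c
  simp only [mul_zero] at h2
  convert h2 using 2 with n
  rw [div_pow, one_pow]
  ring

/-- A commutative, associative, continuous, strictly monotone, solvable
operation on an ord-connected set `J ⊆ ℝ` with identity `x₀`. -/
structure GoodOp (J : Set ℝ) (H : ℝ → ℝ → ℝ) (x₀ : ℝ) : Prop where
  ordConn : J.OrdConnected
  x0mem : x₀ ∈ J
  mem : ∀ p ∈ J, ∀ q ∈ J, H p q ∈ J
  comm : ∀ p ∈ J, ∀ q ∈ J, H p q = H q p
  assoc : ∀ p ∈ J, ∀ q ∈ J, ∀ r ∈ J, H (H p q) r = H p (H q r)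
  idr : ∀ p ∈ J, H p x₀ = p
  mono1 : ∀ q ∈ J, StrictMonoOn (fun p => H p q) J
  cont1 : ∀ q ∈ J, ContinuousOn (fun p => H p q) J
  solv : ∀ p ∈ J, ∀ q ∈ J, ∀ b ∈ J, H p q < b → ∃ w ∈ J, H w q = b


/-- iterated powers: `pw H x₀ c k = c^k` with `c^0 = x₀`. -/
def pw (H : ℝ → ℝ → ℝ) (x₀ c : ℝ) : ℕ → ℝ
  | 0 => x₀
  | k+1 => H (pw H x₀ c k) c


/-- a sequence of iterated square roots of a base element `r 0`. -/
structure IsRootSeq (J : Set ℝ) (H : ℝ → ℝ → ℝ) (x₀ : ℝ) (r : ℕ → ℝ) : Prop where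
  mem : ∀ n, r n ∈ J
  pos : ∀ n, x₀ < r n
  sq : ∀ n, H (r (n+1)) (r (n+1)) = r n


/-- dyadic approximations from below -/
def dyadSet (H : ℝ → ℝ → ℝ) (x₀ : ℝ) (r : ℕ → ℝ) (p : ℝ) : Set ℝ :=
  {x | ∃ k n : ℕ, pw H x₀ (r n) k ≤ p ∧ x = (k : ℝ) / 2 ^ n}

/-- the additive representation function (on the part of `J` above `x₀`) -/
noncomputable def fp (H : ℝ → ℝ → ℝ) (x₀ : ℝ) (r : ℕ → ℝ) (p : ℝ) : ℝ :=
  sSup (dyadSet H x₀ r p)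

lemma nat_cross {k k' n n' d d' N : ℕ} (hnd : n + d = N) (hnd' : n' + d' = N)
    (hge : (k' : ℝ) / 2 ^ n' ≤ (k : ℝ) / 2 ^ n) : k' * 2 ^ d' ≤ k * 2 ^ d := by
  rw [div_le_div_iff₀ (by positivity) (by positivity)] at hge
  have hnat : k' * 2 ^ n ≤ k * 2 ^ n' := by exact_mod_cast hge
  have e1 : 2 ^ N = 2 ^ n * 2 ^ d := by rw [← hnd, pow_add]
  have e2 : 2 ^ N = 2 ^ n' * 2 ^ d' := by rw [← hnd', pow_add]
  have hpos : 0 < 2 ^ N := Nat.pow_pos (by norm_num)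
  apply Nat.le_of_mul_le_mul_right _ hpos
  calc k' * 2 ^ d' * 2 ^ N = (k' * 2 ^ n) * (2 ^ d * 2 ^ d') := by rw [e1]; ring
    _ ≤ (k * 2 ^ n') * (2 ^ d * 2 ^ d') := Nat.mul_le_mul_right _ hnat
    _ = k * 2 ^ d * 2 ^ N := by rw [e2]; ring


/-- `fp` extended to the part of `J` below `x₀` using inverses `iv`. -/
noncomputable def fe (H : ℝ → ℝ → ℝ) (x₀ : ℝ) (r : ℕ → ℝ) (iv : ℝ → ℝ) (p : ℝ) : ℝ :=
  if x₀ ≤ p then fp H x₀ r p else - fp H x₀ r (iv p)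

namespace GoodOp

variable {J : Set ℝ} {H : ℝ → ℝ → ℝ} {x₀ : ℝ} (h : GoodOp J H x₀)

include h

lemma idl {q : ℝ} (hq : q ∈ J) : H x₀ q = q := by
  rw [h.comm x₀ h.x0mem q hq, h.idr q hq]

lemma mono2 {p : ℝ} (hp : p ∈ J) : StrictMonoOn (fun q => H p q) J := by
  intro q hq q' hq' hlt
  simp only
  rw [h.comm p hp q hq, h.comm p hp q' hq']
  exact h.mono1 p hp hq hq' hlt

lemma lt_iff1 {p p' q : ℝ} (hp : p ∈ J) (hp' : p' ∈ J) (hq : q ∈ J) :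
    H p q < H p' q ↔ p < p' := ((h.mono1 q hq).lt_iff_lt hp hp')

lemma le_iff1 {p p' q : ℝ} (hp : p ∈ J) (hp' : p' ∈ J) (hq : q ∈ J) :
    H p q ≤ H p' q ↔ p ≤ p' := ((h.mono1 q hq).le_iff_le hp hp')

lemma lt_iff2 {p q q' : ℝ} (hp : p ∈ J) (hq : q ∈ J) (hq' : q' ∈ J) :
    H p q < H p q' ↔ q < q' := ((h.mono2 hp).lt_iff_lt hq hq')

lemma le_iff2 {p q q' : ℝ} (hp : p ∈ J) (hq : q ∈ J) (hq' : q' ∈ J) :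
    H p q ≤ H p q' ↔ q ≤ q' := ((h.mono2 hp).le_iff_le hq hq')

lemma cancel1 {p p' q : ℝ} (hp : p ∈ J) (hp' : p' ∈ J) (hq : q ∈ J)
    (he : H p q = H p' q) : p = p' :=
  (h.mono1 q hq).injOn hp hp' he

lemma cancel2 {p q q' : ℝ} (hp : p ∈ J) (hq : q ∈ J) (hq' : q' ∈ J)
    (he : H p q = H p q') : q = q' :=
  (h.mono2 hp).injOn hq hq' he

lemma cont2 {p : ℝ} (hp : p ∈ J) : ContinuousOn (fun q => H p q) J := by
  apply ContinuousOn.congr (h.cont1 p hp)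
  intro q hq
  exact (h.comm q hq p hp).symm

lemma self_le {p q : ℝ} (hp : p ∈ J) (hq : q ∈ J) (hq' : x₀ ≤ q) : p ≤ H p q := by
  have := (h.le_iff2 hp h.x0mem hq).2 hq'
  rwa [h.idr p hp] at this

lemma self_lt {p q : ℝ} (hp : p ∈ J) (hq : q ∈ J) (hq' : x₀ < q) : p < H p q := by
  have := (h.lt_iff2 hp h.x0mem hq).2 hq'
  rwa [h.idr p hp] at this

lemma le_self {p q : ℝ} (hp : p ∈ J) (hq : q ∈ J) (hq' : q ≤ x₀) : H p q ≤ p := by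
  have := (h.le_iff2 hp hq h.x0mem).2 hq'
  rwa [h.idr p hp] at this

lemma lt_self {p q : ℝ} (hp : p ∈ J) (hq : q ∈ J) (hq' : q < x₀) : H p q < p := by
  have := (h.lt_iff2 hp hq h.x0mem).2 hq'
  rwa [h.idr p hp] at this

lemma x0_le_mem {p q : ℝ} (hp : p ∈ J) (hq : q ∈ J) (hp' : x₀ ≤ p) (hq' : x₀ ≤ q) :
    x₀ ≤ H p q := by
  calc x₀ ≤ p := hp'
  _ ≤ H p q := h.self_le hp hq hq'

/-- mem via ord-connectedness between two members -/
lemma mem_of_between {u v w : ℝ} (hu : u ∈ J) (hw : w ∈ J) (h1 : u ≤ v) (h2 : v ≤ w) :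
    v ∈ J := h.ordConn.out hu hw ⟨h1, h2⟩

/-- There is an element strictly above the identity. -/
lemma exists_gt (hne : ∃ u ∈ J, ∃ v ∈ J, u ≠ v) : ∃ a ∈ J, x₀ < a := by
  obtain ⟨u, hu, v, hv, huv⟩ := hne
  rcases lt_trichotomy u x₀ with h1 | h1
  · -- u < x₀ : solve H w u = x₀
    have hHu : H x₀ u < x₀ := by
      rw [h.idl hu]; exact h1
    obtain ⟨w, hw, hww⟩ := h.solv x₀ h.x0mem u hu x₀ h.x0mem hHu
    refine ⟨w, hw, ?_⟩
    have : H x₀ u < H w u := by rw [hww, h.idl hu]; exact h1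
    exact (h.lt_iff1 h.x0mem hw hu).1 this
  · rcases lt_trichotomy v x₀ with h2 | h2
    · have hHv : H x₀ v < x₀ := by rw [h.idl hv]; exact h2
      obtain ⟨w, hw, hww⟩ := h.solv x₀ h.x0mem v hv x₀ h.x0mem hHv
      refine ⟨w, hw, ?_⟩
      have : H x₀ v < H w v := by rw [hww, h.idl hv]; exact h2
      exact (h.lt_iff1 h.x0mem hw hv).1 this
    · rcases h1 with rfl | h1'
      · rcases h2 with rfl | h2'
        · exact absurd rfl huv
        · exact ⟨v, hv, h2'⟩
      · exact ⟨u, hu, h1'⟩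

/-- Square roots exist above the identity. -/
lemma sqrt {b : ℝ} (hb : b ∈ J) (hb' : x₀ < b) : ∃ c ∈ J, x₀ < c ∧ H c c = b := by
  set A : Set ℝ := {c | c ∈ J ∧ x₀ ≤ c ∧ H c c ≤ b} with hA
  have hx0A : x₀ ∈ A := ⟨h.x0mem, le_refl _, by rw [h.idr x₀ h.x0mem]; exact le_of_lt hb'⟩
  have hub : ∀ c ∈ A, c ≤ b := by
    rintro c ⟨hcJ, hc0, hcb⟩
    exact le_trans (h.self_le hcJ hcJ hc0) hcb
  have hAne : A.Nonempty := ⟨x₀, hx0A⟩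
  have hAbdd : BddAbove A := ⟨b, hub⟩
  set c₀ : ℝ := sSup A with hc₀
  have hc₀0 : x₀ ≤ c₀ := le_csSup hAbdd hx0A
  have hc₀b : c₀ ≤ b := csSup_le hAne hub
  have hc₀J : c₀ ∈ J := h.mem_of_between h.x0mem hb hc₀0 hc₀b
  -- every pair of elements of A combines to ≤ b
  have hpair : ∀ u ∈ A, ∀ v ∈ A, H u v ≤ b := by
    rintro u ⟨huJ, hu0, hub'⟩ v ⟨hvJ, hv0, hvb⟩
    rcases le_total u v with huv | huv
    · exact le_trans ((h.le_iff1 huJ hvJ hvJ).2 huv) hvb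
    · calc H u v ≤ H u u := (h.le_iff2 huJ hvJ huJ).2 huv
      _ ≤ b := hub'
  -- H c₀ c₀ ≤ b via double limit
  obtain ⟨u, humono, hulim, humem⟩ := exists_seq_tendsto_sSup hAne hAbdd
  have huJ : ∀ n, u n ∈ J := fun n => (humem n).1
  have hulimW : Tendsto u atTop (𝓝[J] c₀) :=
    tendsto_nhdsWithin_of_tendsto_nhds_of_eventually_within u hulim
      (Eventually.of_forall huJ)
  have step1 : ∀ v ∈ A, H c₀ v ≤ b := by
    rintro v hv
    have hvJ : v ∈ J := hv.1
    have : Tendsto (fun n => H (u n) v) atTop (𝓝 (H c₀ v)) :=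
      Filter.Tendsto.comp ((h.cont1 v hvJ) c₀ hc₀J) hulimW
    exact le_of_tendsto this (Eventually.of_forall fun n => hpair _ (humem n) _ hv)
  have step2 : H c₀ c₀ ≤ b := by
    have : Tendsto (fun n => H c₀ (u n)) atTop (𝓝 (H c₀ c₀)) :=
      Filter.Tendsto.comp ((h.cont2 hc₀J) c₀ hc₀J) hulimW
    exact le_of_tendsto this (Eventually.of_forall fun n => step1 _ (humem n))
  -- now exclude H c₀ c₀ < b
  rcases eq_or_lt_of_le step2 with heq | hlt
  · refine ⟨c₀, hc₀J, ?_, heq⟩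
    rcases eq_or_lt_of_le hc₀0 with heq0 | h0
    · exfalso
      rw [← heq0, h.idr x₀ h.x0mem] at heq
      exact absurd heq (ne_of_lt hb')
    · exact h0
  · exfalso
    obtain ⟨w, hwJ, hww⟩ := h.solv c₀ hc₀J c₀ hc₀J b hb hlt
    have hc₀w : c₀ < w := by
      have : H c₀ c₀ < H w c₀ := by rw [hww]; exact hlt
      exact (h.lt_iff1 hc₀J hwJ hc₀J).1 this
    -- find d ∈ J, c₀ < d, H c₀ d < b
    have hev : ∀ᶠ q in 𝓝[J] c₀, H c₀ q < b :=
      ((h.cont2 hc₀J) c₀ hc₀J).eventually_lt_const hlt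
    obtain ⟨ε, hε, hball⟩ := Metric.mem_nhdsWithin_iff.1 hev
    set d : ℝ := min (c₀ + ε / 2) w with hd
    have hdJ : d ∈ J := h.mem_of_between hc₀J hwJ
      (le_min (by linarith) (le_of_lt hc₀w)) (min_le_right _ _)
    have hc₀d : c₀ < d := lt_min (by linarith) hc₀w
    have hdb : H c₀ d < b := by
      apply hball
      constructor
      · rw [Metric.mem_ball, Real.dist_eq, abs_of_pos (by linarith : (0:ℝ) < d - c₀)]
        have : d ≤ c₀ + ε / 2 := min_le_left _ _
        linarith
      · exact hdJ
    -- find c ∈ J, c₀ < c ≤ d, H c d < b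
    have hev2 : ∀ᶠ p in 𝓝[J] c₀, H p d < b :=
      ((h.cont1 d hdJ) c₀ hc₀J).eventually_lt_const hdb
    obtain ⟨ε', hε', hball'⟩ := Metric.mem_nhdsWithin_iff.1 hev2
    set c : ℝ := min (c₀ + ε' / 2) d with hc
    have hcJ : c ∈ J := h.mem_of_between hc₀J hdJ
      (le_min (by linarith) (le_of_lt hc₀d)) (min_le_right _ _)
    have hc₀c : c₀ < c := lt_min (by linarith) hc₀d
    have hcd : c ≤ d := min_le_right _ _
    have hcb : H c d < b := by
      apply hball'
      constructor
      · rw [Metric.mem_ball, Real.dist_eq, abs_of_pos (by linarith : (0:ℝ) < c - c₀)]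
        have : c ≤ c₀ + ε' / 2 := min_le_left _ _
        linarith
      · exact hcJ
    have hcc : H c c ≤ b := le_of_lt (lt_of_le_of_lt ((h.le_iff2 hcJ hcJ hdJ).2 hcd) hcb)
    have : c ∈ A := ⟨hcJ, le_trans hc₀0 (le_of_lt hc₀c), hcc⟩
    exact absurd (le_csSup hAbdd this) (not_le.2 hc₀c)
lemma exists_inv {p : ℝ} (hp : p ∈ J) (hp0 : p < x₀) :
    ∃ w, w ∈ J ∧ x₀ < w ∧ H w p = x₀ := by
  have h1 : H x₀ p < x₀ := by rw [h.idl hp]; exact hp0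
  obtain ⟨w, hw, hww⟩ := h.solv x₀ h.x0mem p hp x₀ h.x0mem h1
  refine ⟨w, hw, ?_, hww⟩
  have : H x₀ p < H w p := by rw [hww, h.idl hp]; exact hp0
  exact (h.lt_iff1 h.x0mem hw hp).1 this

lemma pw_mem {c : ℝ} (hc : c ∈ J) : ∀ k, pw H x₀ c k ∈ J := by
  intro k
  induction k with
  | zero => exact h.x0mem
  | succ k ih => exact h.mem _ ih c hc

lemma pw_one {c : ℝ} (hc : c ∈ J) : pw H x₀ c 1 = c := by
  show H (pw H x₀ c 0) c = c
  exact h.idl hc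

lemma pw_add {c : ℝ} (hc : c ∈ J) (k l : ℕ) :
    pw H x₀ c (k + l) = H (pw H x₀ c k) (pw H x₀ c l) := by
  induction l with
  | zero => simp [pw, h.idr _ (h.pw_mem hc k)]
  | succ l ih =>
      show pw H x₀ c (k + l + 1) = H (pw H x₀ c k) (H (pw H x₀ c l) c)
      rw [← h.assoc _ (h.pw_mem hc k) _ (h.pw_mem hc l) c hc]
      rw [← ih]
      rfl

lemma pw_nonneg {c : ℝ} (hc : c ∈ J) (hc0 : x₀ ≤ c) (k : ℕ) : x₀ ≤ pw H x₀ c k := by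
  induction k with
  | zero => exact le_refl _
  | succ k ih => exact le_trans ih (h.self_le (h.pw_mem hc k) hc hc0)

lemma pw_mono {c : ℝ} (hc : c ∈ J) (hc0 : x₀ ≤ c) {k l : ℕ} (hkl : k ≤ l) :
    pw H x₀ c k ≤ pw H x₀ c l := by
  induction l with
  | zero => rw [Nat.le_zero.1 hkl]
  | succ l ih =>
      rcases eq_or_lt_of_le hkl with rfl | hlt
      · exact le_refl _
      · exact le_trans (ih (Nat.lt_succ_iff.1 hlt))
          (h.self_le (h.pw_mem hc l) hc hc0)

lemma pw_strict {c : ℝ} (hc : c ∈ J) (hc0 : x₀ < c) {k l : ℕ} (hkl : k < l) :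
    pw H x₀ c k < pw H x₀ c l := by
  have h1 : pw H x₀ c k < pw H x₀ c (k + 1) := h.self_lt (h.pw_mem hc k) hc hc0
  exact lt_of_lt_of_le h1 (h.pw_mono hc (le_of_lt hc0) hkl)

/-- Archimedean property: powers of `c > x₀` eventually exceed any element. -/
lemma arch {c : ℝ} (hc : c ∈ J) (hc0 : x₀ < c) {p : ℝ} (hp : p ∈ J) :
    ∃ m : ℕ, p < pw H x₀ c m := by
  by_contra hcon
  push_neg at hcon
  have hmono : Monotone (fun m => pw H x₀ c m) := fun k l hkl => h.pw_mono hc (le_of_lt hc0) hkl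
  have hbdd : BddAbove (range fun m => pw H x₀ c m) := by
    refine ⟨p, ?_⟩
    rintro x ⟨m, rfl⟩
    exact hcon m
  have hlim : Tendsto (fun m => pw H x₀ c m) atTop (𝓝 (⨆ m, pw H x₀ c m)) :=
    tendsto_atTop_ciSup hmono hbdd
  set L : ℝ := ⨆ m, pw H x₀ c m with hL
  have hL0 : x₀ ≤ L := le_ciSup_of_le hbdd 0 (le_refl _)
  have hLp : L ≤ p := ciSup_le hcon
  have hLJ : L ∈ J := h.mem_of_between h.x0mem hp hL0 hLp
  have hlimW : Tendsto (fun m => pw H x₀ c m) atTop (𝓝[J] L) :=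
    tendsto_nhdsWithin_of_tendsto_nhds_of_eventually_within _ hlim
      (Eventually.of_forall fun m => h.pw_mem hc m)
  have h1 : Tendsto (fun m => H (pw H x₀ c m) c) atTop (𝓝 (H L c)) :=
    Filter.Tendsto.comp ((h.cont1 c hc) L hLJ) hlimW
  have h2 : Tendsto (fun m => pw H x₀ c (m + 1)) atTop (𝓝 L) :=
    (tendsto_add_atTop_iff_nat 1).2 hlim
  have h3 : H L c = L := tendsto_nhds_unique h1 h2
  have h4 : L < H L c := h.self_lt hLJ hc hc0
  rw [h3] at h4
  exact lt_irrefl _ h4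

/-- A root sequence exists starting at any `a > x₀`. -/
lemma exists_rootSeq {a : ℝ} (ha : a ∈ J) (ha0 : x₀ < a) :
    ∃ r : ℕ → ℝ, IsRootSeq J H x₀ r ∧ r 0 = a := by
  have sqrt' : ∀ b, b ∈ J → x₀ < b → ∃ c, c ∈ J ∧ x₀ < c ∧ H c c = b := fun b hb hb' => by
    obtain ⟨c, hc1, hc2, hc3⟩ := h.sqrt hb hb'
    exact ⟨c, hc1, hc2, hc3⟩
  choose sq hsq1 hsq2 hsq3 using sqrt'
  let rs : ℕ → {c : ℝ // c ∈ J ∧ x₀ < c} := fun n =>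
    Nat.rec ⟨a, ha, ha0⟩ (fun _ p => ⟨sq p.1 p.2.1 p.2.2, hsq1 _ _ _, hsq2 _ _ _⟩) n
  exact ⟨fun n => (rs n).1, ⟨fun n => (rs n).2.1, fun n => (rs n).2.2,
    fun n => hsq3 (rs n).1 (rs n).2.1 (rs n).2.2⟩, rfl⟩

variable {r : ℕ → ℝ} (hr : IsRootSeq J H x₀ r)
include hr

lemma pw_two (n : ℕ) : pw H x₀ (r (n+1)) 2 = r n := by
  show H (pw H x₀ (r (n+1)) 1) (r (n+1)) = r n
  rw [h.pw_one (hr.mem (n+1))]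
  exact hr.sq n

lemma pw_double (n k : ℕ) : pw H x₀ (r (n+1)) (2*k) = pw H x₀ (r n) k := by
  induction k with
  | zero => rfl
  | succ k ih =>
    have : 2 * (k + 1) = 2 * k + 2 := by ring
    rw [this, h.pw_add (hr.mem (n+1)) (2*k) 2, ih, h.pw_two hr n]
    rfl

lemma pw_lift (n d k : ℕ) : pw H x₀ (r (n+d)) (k * 2^d) = pw H x₀ (r n) k := by
  induction d with
  | zero => simp
  | succ d ih =>
    have e1 : n + (d+1) = (n + d) + 1 := by ring
    have e2 : k * 2^(d+1) = 2 * (k * 2^d) := by ring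
    rw [e1, e2, h.pw_double hr (n+d) (k * 2^d), ih]

lemma r_strictAnti : StrictAnti r := by
  apply strictAnti_nat_of_succ_lt
  intro n
  have h1 : r (n+1) < H (r (n+1)) (r (n+1)) :=
    h.self_lt (hr.mem (n+1)) (hr.mem (n+1)) (hr.pos (n+1))
  rwa [hr.sq n] at h1

lemma r_tendsto : Tendsto r atTop (𝓝 x₀) := by
  have hbdd : BddBelow (range r) := by
    refine ⟨x₀, ?_⟩
    rintro x ⟨n, rfl⟩
    exact le_of_lt (hr.pos n)
  have hlim : Tendsto r atTop (𝓝 (⨅ n, r n)) :=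
    tendsto_atTop_ciInf (h.r_strictAnti hr).antitone hbdd
  set m : ℝ := ⨅ n, r n with hm
  have hm0 : x₀ ≤ m := le_ciInf fun n => le_of_lt (hr.pos n)
  have hmr0 : m ≤ r 0 := ciInf_le hbdd 0
  have hmJ : m ∈ J := h.mem_of_between h.x0mem (hr.mem 0) hm0 hmr0
  have hup : H m m ≤ m := by
    apply le_ciInf
    intro n
    calc H m m ≤ H (r (n+1)) (r (n+1)) := by
          apply le_trans ((h.le_iff1 hmJ (hr.mem (n+1)) hmJ).2 (ciInf_le hbdd (n+1)))
          exact (h.le_iff2 (hr.mem (n+1)) hmJ (hr.mem (n+1))).2 (ciInf_le hbdd (n+1))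
      _ = r n := hr.sq n
  have hdown : m ≤ H m m := h.self_le hmJ hmJ hm0
  have heq : H m m = H m x₀ := by
    rw [h.idr m hmJ]
    exact le_antisymm hup hdown
  have : m = x₀ := h.cancel2 hmJ hmJ h.x0mem heq
  rwa [this] at hlim

lemma r_tendstoW : Tendsto r atTop (𝓝[J] x₀) :=
  tendsto_nhdsWithin_of_tendsto_nhds_of_eventually_within _ (h.r_tendsto hr)
    (Eventually.of_forall hr.mem)

/-- `H p (r n) → p`. -/
lemma H_r_tendsto {p : ℝ} (hp : p ∈ J) :
    Tendsto (fun n => H p (r n)) atTop (𝓝 p) := by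
  have h1 := Filter.Tendsto.comp ((h.cont2 hp) x₀ h.x0mem) (h.r_tendstoW hr)
  simp only [Function.comp_def] at h1
  rwa [h.idr p hp] at h1

/-- key comparison -/
lemma dyadic_lt {p : ℝ} {k n k' n' : ℕ}
    (h1 : pw H x₀ (r n) k ≤ p) (h2 : p < pw H x₀ (r n') k') :
    (k : ℝ) / 2 ^ n < (k' : ℝ) / 2 ^ n' := by
  by_contra hcon
  push_neg at hcon
  obtain ⟨d, hd⟩ := Nat.exists_eq_add_of_le (le_max_left n n')
  obtain ⟨d', hd'⟩ := Nat.exists_eq_add_of_le (le_max_right n n')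
  have hcross : k' * 2 ^ d' ≤ k * 2 ^ d :=
    nat_cross (N := max n n') hd.symm hd'.symm hcon
  have h3 : pw H x₀ (r (n + d)) (k' * 2 ^ d') ≤ pw H x₀ (r (n + d)) (k * 2 ^ d) :=
    h.pw_mono (hr.mem _) (le_of_lt (hr.pos _)) hcross
  rw [h.pw_lift hr n d k] at h3
  rw [show n + d = n' + d' from by omega, h.pw_lift hr n' d' k'] at h3
  exact absurd (lt_of_le_of_lt (le_trans h3 h1) h2) (lt_irrefl _)

omit h hr in
lemma dyad_zero_mem {p : ℝ} (hp0 : x₀ ≤ p) : (0:ℝ) ∈ dyadSet H x₀ r p := by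
  refine ⟨0, 0, hp0, by norm_num⟩

lemma dyad_nonempty {p : ℝ} (hp0 : x₀ ≤ p) : (dyadSet H x₀ r p).Nonempty :=
  ⟨0, dyad_zero_mem hp0⟩

lemma dyad_bdd {p : ℝ} (hp : p ∈ J) : BddAbove (dyadSet H x₀ r p) := by
  obtain ⟨m, hm⟩ := h.arch (hr.mem 0) (hr.pos 0) hp
  refine ⟨(m : ℝ), ?_⟩
  rintro x ⟨k, n, h1, rfl⟩
  have hlt : (k:ℝ)/2^n < (m:ℝ)/2^(0:ℕ) := h.dyadic_lt hr h1 hm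
  norm_num at hlt
  exact le_of_lt hlt

lemma fp_lower {p : ℝ} (hp : p ∈ J) {k n : ℕ} (h1 : pw H x₀ (r n) k ≤ p) :
    (k : ℝ) / 2 ^ n ≤ fp H x₀ r p :=
  le_csSup (h.dyad_bdd hr hp) ⟨k, n, h1, rfl⟩

lemma fp_upper {p : ℝ} (hp0 : x₀ ≤ p) {k n : ℕ} (h2 : p < pw H x₀ (r n) k) :
    fp H x₀ r p ≤ (k : ℝ) / 2 ^ n := by
  apply csSup_le (h.dyad_nonempty hr hp0)
  rintro x ⟨k', n', h1, rfl⟩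
  exact le_of_lt (h.dyadic_lt hr h1 h2)

lemma fp_nonneg {p : ℝ} (hp : p ∈ J) (hp0 : x₀ ≤ p) : 0 ≤ fp H x₀ r p :=
  le_csSup (h.dyad_bdd hr hp) (dyad_zero_mem hp0)

/-- existence of the largest `k` with `(r n)^k ≤ p`. -/
lemma exists_maxk {p : ℝ} (hp : p ∈ J) (hp0 : x₀ ≤ p) (n : ℕ) :
    ∃ k₁ : ℕ, pw H x₀ (r n) k₁ ≤ p ∧ p < pw H x₀ (r n) (k₁ + 1) := by
  obtain ⟨m, hm⟩ := h.arch (hr.mem 0) (hr.pos 0) hp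
  classical
  set P : ℕ → Prop := fun k => pw H x₀ (r n) k ≤ p with hP
  have hbound : ∀ k, P k → k ≤ m * 2 ^ n := by
    intro k hk
    by_contra hgt
    push_neg at hgt
    have h1 : pw H x₀ (r n) (m * 2 ^ n) ≤ pw H x₀ (r n) k :=
      h.pw_mono (hr.mem n) (le_of_lt (hr.pos n)) (le_of_lt hgt)
    have e1 := h.pw_lift hr 0 n m
    rw [show (0:ℕ) + n = n from by omega] at e1
    rw [e1] at h1
    exact absurd (lt_of_lt_of_le hm (le_trans h1 hk)) (lt_irrefl _)
  set k₁ := Nat.findGreatest P (m * 2 ^ n) with hk₁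
  have hspec : P k₁ := Nat.findGreatest_spec (Nat.zero_le _) (by simpa [hP, pw] using hp0)
  refine ⟨k₁, hspec, ?_⟩
  by_contra hcon
  push_neg at hcon
  have : k₁ + 1 ≤ k₁ := Nat.le_findGreatest (hbound _ hcon) hcon
  omega

/-- additivity of `fp` on the upper part of `J`. -/
lemma fp_add {p q : ℝ} (hp : p ∈ J) (hp0 : x₀ ≤ p) (hq : q ∈ J) (hq0 : x₀ ≤ q) :
    fp H x₀ r (H p q) = fp H x₀ r p + fp H x₀ r q := by
  have hpq : H p q ∈ J := h.mem p hp q hq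
  have hpq0 : x₀ ≤ H p q := h.x0_le_mem hp hq hp0 hq0
  have key : ∀ n : ℕ, |fp H x₀ r (H p q) - (fp H x₀ r p + fp H x₀ r q)| ≤ 2 / 2 ^ n := by
    intro n
    obtain ⟨k₁, hk₁, hk₁'⟩ := h.exists_maxk hr hp hp0 n
    obtain ⟨k₂, hk₂, hk₂'⟩ := h.exists_maxk hr hq hq0 n
    obtain ⟨k₃, hk₃, hk₃'⟩ := h.exists_maxk hr hpq hpq0 n
    have hrnJ : r n ∈ J := hr.mem n
    have hrn0 : x₀ ≤ r n := le_of_lt (hr.pos n)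
    have hmem : ∀ k, pw H x₀ (r n) k ∈ J := h.pw_mem hrnJ
    -- pw (k₁+k₂) ≤ H p q
    have low : pw H x₀ (r n) (k₁ + k₂) ≤ H p q := by
      rw [h.pw_add hrnJ k₁ k₂]
      calc H (pw H x₀ (r n) k₁) (pw H x₀ (r n) k₂)
          ≤ H p (pw H x₀ (r n) k₂) := (h.le_iff1 (hmem k₁) hp (hmem k₂)).2 hk₁
        _ ≤ H p q := (h.le_iff2 hp (hmem k₂) hq).2 hk₂
    -- H p q < pw (k₁+k₂+2)
    have high : H p q < pw H x₀ (r n) (k₁ + 1 + (k₂ + 1)) := by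
      rw [h.pw_add hrnJ (k₁+1) (k₂+1)]
      calc H p q < H (pw H x₀ (r n) (k₁+1)) q := (h.lt_iff1 hp (hmem (k₁+1)) hq).2 hk₁'
        _ < H (pw H x₀ (r n) (k₁+1)) (pw H x₀ (r n) (k₂+1)) :=
            (h.lt_iff2 (hmem (k₁+1)) hq (hmem (k₂+1))).2 hk₂'
    -- deduce k₁ + k₂ ≤ k₃ ≤ k₁ + k₂ + 1
    have hle1 : k₁ + k₂ ≤ k₃ := by
      by_contra hcon
      push_neg at hcon
      have : pw H x₀ (r n) (k₃ + 1) ≤ pw H x₀ (r n) (k₁ + k₂) :=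
        h.pw_mono hrnJ hrn0 hcon
      exact absurd (lt_of_lt_of_le hk₃' (le_trans this low)) (lt_irrefl _)
    have hle2 : k₃ ≤ k₁ + k₂ + 1 := by
      by_contra hcon
      push_neg at hcon
      have : pw H x₀ (r n) (k₁ + 1 + (k₂ + 1)) ≤ pw H x₀ (r n) (k₃) := by
        apply h.pw_mono hrnJ hrn0
        omega
      exact absurd (lt_of_lt_of_le high (le_trans this hk₃)) (lt_irrefl _)
    -- numeric bounds
    have b1 : fp H x₀ r (H p q) ≤ ((k₃:ℝ)+1) / 2^n := by
      have := h.fp_upper hr hpq0 hk₃'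
      push_cast at this ⊢
      linarith
    have b2 : (k₃:ℝ)/2^n ≤ fp H x₀ r (H p q) := h.fp_lower hr hpq hk₃
    have b3 : (k₁:ℝ)/2^n ≤ fp H x₀ r p := h.fp_lower hr hp hk₁
    have b4 : fp H x₀ r p ≤ ((k₁:ℝ)+1)/2^n := by
      have := h.fp_upper hr hp0 hk₁'
      push_cast at this ⊢
      linarith
    have b5 : (k₂:ℝ)/2^n ≤ fp H x₀ r q := h.fp_lower hr hq hk₂
    have b6 : fp H x₀ r q ≤ ((k₂:ℝ)+1)/2^n := by
      have := h.fp_upper hr hq0 hk₂'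
      push_cast at this ⊢
      linarith
    have hc1 : ((k₁:ℝ) + k₂) ≤ k₃ := by exact_mod_cast hle1
    have hc2 : (k₃:ℝ) ≤ (k₁:ℝ) + k₂ + 1 := by exact_mod_cast hle2
    have e1 : ((k₃:ℝ)+1)/2^n - ((k₁:ℝ)/2^n + (k₂:ℝ)/2^n) ≤ 2/2^n := by
      rw [← add_div, div_sub_div_same, div_le_div_iff₀ (by positivity) (by positivity)]
      ring_nf
      nlinarith [pow_pos (show (0:ℝ) < 2 by norm_num) n]
    have e2 : -(2/2^n) ≤ (k₃:ℝ)/2^n - (((k₁:ℝ)+1)/2^n + ((k₂:ℝ)+1)/2^n) := by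
      rw [← add_div, div_sub_div_same]
      rw [neg_le, ← neg_div, neg_sub, div_le_div_iff₀ (by positivity) (by positivity)]
      nlinarith [pow_pos (show (0:ℝ) < 2 by norm_num) n]
    rw [abs_le]
    constructor
    · linarith
    · linarith
  have htend : Tendsto (fun n : ℕ => (2:ℝ) / 2 ^ n) atTop (𝓝 0) := by
    have := tendsto_pow_atTop_nhds_zero_of_lt_one
      (show (0:ℝ) ≤ 1/2 by norm_num) (show (1:ℝ)/2 < 1 by norm_num)
    have h2 := this.const_mul (2:ℝ)
    simp only [mul_zero] at h2
    convert h2 using 2 with n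
    rw [div_pow, one_pow]
    ring
  have habs : |fp H x₀ r (H p q) - (fp H x₀ r p + fp H x₀ r q)| ≤ 0 :=
    ge_of_tendsto htend (Eventually.of_forall key)
  have h0 : |fp H x₀ r (H p q) - (fp H x₀ r p + fp H x₀ r q)| = 0 :=
    le_antisymm habs (abs_nonneg _)
  have := abs_eq_zero.1 h0
  linarith [this]

lemma fp_x0 : fp H x₀ r x₀ = 0 := by
  have := h.fp_add hr h.x0mem (le_refl x₀) h.x0mem (le_refl x₀)
  rw [h.idr x₀ h.x0mem] at this
  linarith

lemma fp_strictMono {p q : ℝ} (hp : p ∈ J) (hp0 : x₀ ≤ p) (hq : q ∈ J) (hpq : p < q) :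
    fp H x₀ r p < fp H x₀ r q := by
  obtain ⟨n, hn⟩ := ((h.H_r_tendsto hr hp).eventually_lt_const hpq).exists
  obtain ⟨k₁, hk₁, hk₁'⟩ := h.exists_maxk hr hp hp0 (n+1)
  have hrJ : r (n+1) ∈ J := hr.mem (n+1)
  have hr0 : x₀ ≤ r (n+1) := le_of_lt (hr.pos (n+1))
  have hmem : ∀ k, pw H x₀ (r (n+1)) k ∈ J := h.pw_mem hrJ
  -- pw (k₁+2) at scale n+1 is ≤ H p (r n) < q
  have step : pw H x₀ (r (n+1)) (k₁ + 2) ≤ H p (r n) := by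
    have e0 : pw H x₀ (r (n+1)) (k₁ + 2) =
        H (H (pw H x₀ (r (n+1)) k₁) (r (n+1))) (r (n+1)) := rfl
    rw [e0]
    have e1 : H (H p (r (n+1))) (r (n+1)) = H p (r n) := by
      rw [h.assoc p hp (r (n+1)) hrJ (r (n+1)) hrJ, hr.sq n]
    rw [← e1]
    have s1 : H (pw H x₀ (r (n+1)) k₁) (r (n+1)) ≤ H p (r (n+1)) :=
      (h.le_iff1 (hmem k₁) hp hrJ).2 hk₁
    exact (h.le_iff1 (h.mem _ (hmem k₁) _ hrJ) (h.mem p hp _ hrJ) hrJ).2 s1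
  have hql : pw H x₀ (r (n+1)) (k₁ + 2) ≤ q := le_trans step (le_of_lt hn)
  have hlow : ((k₁:ℝ)+2)/2^(n+1) ≤ fp H x₀ r q := by
    have := h.fp_lower hr hq hql
    push_cast at this ⊢
    linarith
  have hup : fp H x₀ r p ≤ ((k₁:ℝ)+1)/2^(n+1) := by
    have := h.fp_upper hr hp0 hk₁'
    push_cast at this ⊢
    linarith
  have hlt : ((k₁:ℝ)+1)/2^(n+1) < ((k₁:ℝ)+2)/2^(n+1) := by
    apply div_lt_div_of_pos_right (by linarith) (by positivity)
  linarith [hlt]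

lemma fp_r (n : ℕ) : fp H x₀ r (r n) = fp H x₀ r (r 0) / 2 ^ n := by
  induction n with
  | zero => norm_num
  | succ n ih =>
    have := h.fp_add hr (hr.mem (n+1)) (le_of_lt (hr.pos (n+1)))
      (hr.mem (n+1)) (le_of_lt (hr.pos (n+1)))
    rw [hr.sq n, ih] at this
    have e : fp H x₀ r (r (n+1)) = fp H x₀ r (r 0) / 2 ^ n / 2 := by linarith
    rw [e]
    rw [pow_succ]
    ring

lemma fp_r0_ge1 : 1 ≤ fp H x₀ r (r 0) := by
  have h1 : pw H x₀ (r 0) 1 ≤ r 0 := by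
    show H x₀ (r 0) ≤ r 0
    rw [h.comm x₀ h.x0mem (r 0) (hr.mem 0), h.idr (r 0) (hr.mem 0)]
  have := h.fp_lower hr (hr.mem 0) h1
  norm_num at this
  exact this

variable {iv : ℝ → ℝ}
    (hiv : ∀ p, p ∈ J → p < x₀ → iv p ∈ J ∧ x₀ < iv p ∧ H (iv p) p = x₀)
include hiv

lemma fe_of_ge {p : ℝ} (hp0 : x₀ ≤ p) : fe H x₀ r iv p = fp H x₀ r p := if_pos hp0
lemma fe_of_lt {p : ℝ} (hp0 : p < x₀) : fe H x₀ r iv p = - fp H x₀ r (iv p) :=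
  if_neg (not_le.2 hp0)

/-- mixed-sign additivity case -/
lemma fe_add_mixed {p q : ℝ} (hp : p ∈ J) (hplt : p < x₀) (hq : q ∈ J) (hq0 : x₀ ≤ q) :
    fe H x₀ r iv (H p q) = fe H x₀ r iv p + fe H x₀ r iv q := by
  obtain ⟨hwJ, hw0, hww⟩ := hiv p hp hplt
  have hpqJ : H p q ∈ J := h.mem p hp q hq
  rw [h.fe_of_lt hr hiv hplt, h.fe_of_ge hr hiv hq0]
  rcases le_or_gt x₀ (H p q) with hc | hc
  · rw [h.fe_of_ge hr hiv hc]
    have key : H (iv p) (H p q) = q := by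
      rw [← h.assoc (iv p) hwJ p hp q hq, hww, h.idl hq]
    have hadd := h.fp_add hr hwJ (le_of_lt hw0) hpqJ hc
    rw [key] at hadd
    linarith
  · rw [h.fe_of_lt hr hiv hc]
    obtain ⟨hmJ, hm0, hmm⟩ := hiv (H p q) hpqJ hc
    have key : H (iv (H p q)) q = iv p := by
      apply h.cancel1 (h.mem _ hmJ q hq) hwJ hp
      rw [h.assoc _ hmJ q hq p hp, h.comm q hq p hp, hmm, hww]
    have hadd := h.fp_add hr hmJ (le_of_lt hm0) hq hq0
    rw [key] at hadd
    linarith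

lemma fe_add {p q : ℝ} (hp : p ∈ J) (hq : q ∈ J) :
    fe H x₀ r iv (H p q) = fe H x₀ r iv p + fe H x₀ r iv q := by
  rcases le_or_gt x₀ p with hp0 | hp0
  · rcases le_or_gt x₀ q with hq0 | hq0
    · rw [h.fe_of_ge hr hiv hp0, h.fe_of_ge hr hiv hq0,
        h.fe_of_ge hr hiv (h.x0_le_mem hp hq hp0 hq0)]
      exact h.fp_add hr hp hp0 hq hq0
    · rw [h.comm p hp q hq, add_comm]
      exact h.fe_add_mixed hr hiv hq hq0 hp hp0
  · rcases le_or_gt x₀ q with hq0 | hq0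
    · exact h.fe_add_mixed hr hiv hp hp0 hq hq0
    · -- both negative
      obtain ⟨hw1J, hw10, hw1⟩ := hiv p hp hp0
      obtain ⟨hw2J, hw20, hw2⟩ := hiv q hq hq0
      have hpqJ : H p q ∈ J := h.mem p hp q hq
      have hpqlt : H p q < x₀ := by
        have h1 : H p q < H x₀ q := (h.lt_iff1 hp h.x0mem hq).2 hp0
        rw [h.idl hq] at h1
        exact lt_trans h1 hq0
      obtain ⟨hmJ, hm0, hmm⟩ := hiv (H p q) hpqJ hpqlt
      have key : H (iv p) (iv q) = iv (H p q) := by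
        apply h.cancel1 (h.mem _ hw1J _ hw2J) hmJ hpqJ
        rw [hmm]
        have e1 : H (iv q) (H p q) = p := by
          rw [h.comm p hp q hq, ← h.assoc _ hw2J q hq p hp, hw2, h.idl hp]
        rw [h.assoc _ hw1J _ hw2J _ hpqJ, e1, hw1]
      rw [h.fe_of_lt hr hiv hp0, h.fe_of_lt hr hiv hq0, h.fe_of_lt hr hiv hpqlt]
      have hadd := h.fp_add hr hw1J (le_of_lt hw10) hw2J (le_of_lt hw20)
      rw [key] at hadd
      linarith

lemma fe_x0 : fe H x₀ r iv x₀ = 0 := by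
  rw [h.fe_of_ge hr hiv (le_refl x₀)]
  exact h.fp_x0 hr

lemma fe_strictMono : StrictMonoOn (fe H x₀ r iv) J := by
  intro p hp q hq hpq
  rcases le_or_gt x₀ p with hp0 | hp0
  · rw [h.fe_of_ge hr hiv hp0, h.fe_of_ge hr hiv (le_trans hp0 (le_of_lt hpq))]
    exact h.fp_strictMono hr hp hp0 hq hpq
  · rcases le_or_gt x₀ q with hq0 | hq0
    · rw [h.fe_of_lt hr hiv hp0, h.fe_of_ge hr hiv hq0]
      obtain ⟨hw1J, hw10, hw1⟩ := hiv p hp hp0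
      have h1 : 0 < fp H x₀ r (iv p) := by
        have := h.fp_strictMono hr h.x0mem (le_refl x₀) hw1J hw10
        rw [h.fp_x0 hr] at this
        exact this
      have h2 : 0 ≤ fp H x₀ r q := h.fp_nonneg hr hq hq0
      linarith
    · rw [h.fe_of_lt hr hiv hp0, h.fe_of_lt hr hiv hq0]
      obtain ⟨hw1J, hw10, hw1⟩ := hiv p hp hp0
      obtain ⟨hw2J, hw20, hw2⟩ := hiv q hq hq0
      have hlt : iv q < iv p := by
        have h1 : H (iv q) p < H (iv q) q := (h.lt_iff2 hw2J hp hq).2 hpq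
        rw [hw2, ← hw1] at h1
        exact (h.lt_iff1 hw2J hw1J hp).1 h1
      have := h.fp_strictMono hr hw2J (le_of_lt hw20) hw1J hlt
      linarith

lemma fe_r (n : ℕ) : fe H x₀ r iv (r n) = fp H x₀ r (r 0) / 2 ^ n := by
  rw [h.fe_of_ge hr hiv (le_of_lt (hr.pos n))]
  exact h.fp_r hr n

lemma fe_ordConn : (fe H x₀ r iv '' J).OrdConnected := by
  rw [Set.ordConnected_iff]
  rintro y1 ⟨p, hp, rfl⟩ y2 ⟨q, hq, rfl⟩ hle
  rintro γ ⟨hγ1, hγ2⟩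
  set F := fe H x₀ r iv with hF
  set S : Set ℝ := {t | t ∈ J ∧ p ≤ t ∧ F t ≤ γ} with hS
  have hpS : p ∈ S := ⟨hp, le_refl _, hγ1⟩
  have hSub : ∀ t ∈ S, t ≤ q := by
    rintro t ⟨htJ, _, hft⟩
    by_contra hcon
    push_neg at hcon
    have := h.fe_strictMono hr hiv hq htJ hcon
    rw [← hF] at this
    linarith
  have hSbdd : BddAbove S := ⟨q, hSub⟩
  have hSne : S.Nonempty := ⟨p, hpS⟩
  set c := sSup S with hc
  have hpc : p ≤ c := le_csSup hSbdd hpS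
  have hcq : c ≤ q := csSup_le hSne hSub
  have hcJ : c ∈ J := h.mem_of_between hp hq hpc hcq
  have hε : Tendsto (fun n : ℕ => fp H x₀ r (r 0) / 2 ^ n) atTop (𝓝 0) :=
    tendsto_div_two_pow _
  rcases lt_trichotomy (F c) γ with hlt | heq | hgt
  · exfalso
    obtain ⟨n, hn⟩ := (hε.eventually_lt_const (by linarith : (0:ℝ) < γ - F c)).exists
    set z := H c (r n) with hz
    have hzJ : z ∈ J := h.mem c hcJ _ (hr.mem n)
    have hcz : c < z := h.self_lt hcJ (hr.mem n) (hr.pos n)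
    have hfz : F z = F c + fp H x₀ r (r 0) / 2 ^ n := by
      rw [hF, hz, h.fe_add hr hiv hcJ (hr.mem n), h.fe_r hr hiv n]
    have hzS : z ∈ S := ⟨hzJ, le_trans hpc (le_of_lt hcz), by rw [hfz]; linarith⟩
    have := le_csSup hSbdd hzS
    rw [← hc] at this
    linarith
  · exact ⟨c, hcJ, heq⟩
  · exfalso
    have hcp : p < c := by
      rcases eq_or_lt_of_le hpc with he | h1
      · rw [← he] at hgt; linarith
      · exact h1
    have hev1 : ∀ᶠ n in atTop, H p (r n) < c :=
      (h.H_r_tendsto hr hp).eventually_lt_const hcp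
    have hev2 : ∀ᶠ n in atTop, fp H x₀ r (r 0) / 2 ^ n < F c - γ :=
      hε.eventually_lt_const (by linarith)
    obtain ⟨n, hn1, hn2⟩ := (hev1.and hev2).exists
    obtain ⟨w, hwJ, hw⟩ := h.solv p hp (r n) (hr.mem n) c hcJ hn1
    have hfw : F w + fp H x₀ r (r 0) / 2 ^ n = F c := by
      have := h.fe_add hr hiv hwJ (hr.mem n)
      rw [hw, h.fe_r hr hiv n] at this
      rw [hF, this]
    have hwc : w < c := by
      have := h.self_lt hwJ (hr.mem n) (hr.pos n)
      rwa [hw] at this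
    have hub : ∀ t ∈ S, t ≤ w := by
      rintro t ⟨htJ, _, hft⟩
      by_contra hcon
      push_neg at hcon
      have := h.fe_strictMono hr hiv hwJ htJ hcon
      rw [← hF] at this
      linarith
    have := csSup_le hSne hub
    rw [← hc] at this
    linarith

omit hr hiv in
/-- The core representation theorem for a good operation. -/
lemma exists_rep (hne : ∃ u ∈ J, ∃ v ∈ J, u ≠ v) :
    ∃ f : ℝ → ℝ, ContinuousOn f J ∧ StrictMonoOn f J ∧
      ∀ p ∈ J, ∀ q ∈ J, f (H p q) = f p + f q := by
  obtain ⟨a, ha, ha0⟩ := h.exists_gt hne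
  obtain ⟨r, hr, -⟩ := h.exists_rootSeq ha ha0
  have hiv0 : ∀ p, ∃ w, p ∈ J → p < x₀ → (w ∈ J ∧ x₀ < w ∧ H w p = x₀) := by
    intro p
    by_cases hc : p ∈ J ∧ p < x₀
    · obtain ⟨w, hw⟩ := h.exists_inv hc.1 hc.2
      exact ⟨w, fun _ _ => hw⟩
    · exact ⟨x₀, fun h1 h2 => absurd ⟨h1, h2⟩ hc⟩
  choose iv hiv using hiv0
  refine ⟨fe H x₀ r iv, ?_, h.fe_strictMono hr hiv, fun p hp q hq => h.fe_add hr hiv hp hq⟩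
  exact contOn_of_strictMonoOn (h.fe_strictMono hr hiv) (h.fe_ordConn hr hiv)


end GoodOp

end PermCode


/-- Theorem (ii): a solvable code `G : J × J' → J` is permutable iff
`G(y,r) = f⁻¹(f(y) + g(r))` for some continuous `f` strictly increasing on `J`
and continuous `g` strictly monotonic on `J'` (equivalently, since `G(y,r) ∈ J`,
`f(G(y,r)) = f(y) + g(r)`, so `f(y) + g(r)` lies in the range of `f`). -/
theorem permutable_iff_additive_representation
    (J J' : Set ℝ) (G : ℝ → ℝ → ℝ) (x₀ : ℝ)
    (hJ : NondegNonnegInterval J) (hJ' : NondegNonnegInterval J')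
    (hcode : IsCode J J' J G)
    (hS1 : SolvS1 J J' J G) (hS2 : X0Solvable J J' J G x₀) :
    Permutable J J' G ↔
      ∃ f g : ℝ → ℝ,
        ContinuousOn f J ∧ StrictMonoOn f J ∧
        ContinuousOn g J' ∧ (StrictMonoOn g J' ∨ StrictAntiOn g J') ∧
        (∀ y ∈ J, ∀ r ∈ J', f y + g r ∈ f '' J) ∧
        ∀ y ∈ J, ∀ r ∈ J', f (G y r) = f y + g r := by
  obtain ⟨hmemG, hsurjG, hmono1, hmono2or, hcont1, hcont2⟩ := hcode
  obtain ⟨hx₀J, hx₀s⟩ := hS2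
  constructor
  · -- forward direction
    intro hperm
    -- choose sections: v q ∈ J' with G x₀ (v q) = q
    have hvex : ∀ q, ∃ s, q ∈ J → (s ∈ J' ∧ G x₀ s = q) := by
      intro q
      by_cases hq : q ∈ J
      · obtain ⟨s, hs, hss⟩ := hx₀s q hq
        exact ⟨s, fun _ => ⟨hs, hss⟩⟩
      · obtain ⟨c, hc, -⟩ := hJ'.2.1
        exact ⟨c, fun hq' => absurd hq' hq⟩
    choose v hv using hvex
    have hv1 : ∀ q ∈ J, v q ∈ J' := fun q hq => (hv q hq).1
    have hv2 : ∀ q ∈ J, G x₀ (v q) = q := fun q hq => (hv q hq).2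
    -- well-definedness
    have hWD : ∀ p ∈ J, ∀ s ∈ J', G p s = G (G x₀ s) (v p) := by
      intro p hp s hs
      conv_lhs => rw [← hv2 p hp]
      exact hperm x₀ hx₀J (v p) (hv1 p hp) s hs
    have hWD2 : ∀ y ∈ J, ∀ s ∈ J', ∀ t ∈ J', G x₀ s = G x₀ t → G y s = G y t := by
      intro y hy s hs t ht hst
      rw [hWD y hy s hs, hWD y hy t ht, hst]
    set H : ℝ → ℝ → ℝ := fun p q => G p (v q) with hH
    have hmemH : ∀ p ∈ J, ∀ q ∈ J, H p q ∈ J :=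
      fun p hp q hq => hmemG p hp (v q) (hv1 q hq)
    have hcommH : ∀ p ∈ J, ∀ q ∈ J, H p q = H q p := by
      intro p hp q hq
      show G p (v q) = G q (v p)
      rw [hWD p hp (v q) (hv1 q hq), hv2 q hq]
    have hgood : PermCode.GoodOp J H x₀ := by
      constructor
      · exact hJ.1
      · exact hx₀J
      · exact hmemH
      · exact hcommH
      · -- assoc
        intro p hp q hq rr hrr
        show G (G p (v q)) (v rr) = G p (v (H q rr))
        have hqr : H q rr ∈ J := hmemH q hq rr hrr
        have e1 : G p (v (H q rr)) = G (G q (v rr)) (v p) := by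
          rw [hWD p hp (v (H q rr)) (hv1 _ hqr), hv2 _ hqr]
        rw [e1]
        conv_lhs => rw [← hv2 p hp]
        conv_rhs => rw [← hv2 q hq]
        rw [hperm x₀ hx₀J (v p) (hv1 p hp) (v q) (hv1 q hq)]
        exact hperm (G x₀ (v q)) (hmemG x₀ hx₀J (v q) (hv1 q hq))
          (v p) (hv1 p hp) (v rr) (hv1 rr hrr)
      · -- idr
        intro p hp
        show G p (v x₀) = p
        rw [hWD p hp (v x₀) (hv1 x₀ hx₀J), hv2 x₀ hx₀J, hv2 p hp]
      · exact fun q hq => hmono1 (v q) (hv1 q hq)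
      · exact fun q hq => hcont1 (v q) (hv1 q hq)
      · -- solv
        intro p hp q hq b hb hlt
        exact hS1 p hp (v q) (hv1 q hq) b hb hlt
    obtain ⟨f, hfc, hfm, hfadd⟩ := hgood.exists_rep hJ.2.1
    set g : ℝ → ℝ := fun s => f (G x₀ s) with hg
    have hkey : ∀ y ∈ J, ∀ s ∈ J', G y s = H y (G x₀ s) := by
      intro y hy s hs
      show G y s = G y (v (G x₀ s))
      have hGxs : G x₀ s ∈ J := hmemG x₀ hx₀J s hs
      exact hWD2 y hy s hs (v (G x₀ s)) (hv1 _ hGxs) (hv2 _ hGxs).symm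
    have hmain : ∀ y ∈ J, ∀ s ∈ J', f (G y s) = f y + g s := by
      intro y hy s hs
      rw [hkey y hy s hs]
      exact hfadd y hy (G x₀ s) (hmemG x₀ hx₀J s hs)
    refine ⟨f, g, hfc, hfm, ?_, ?_, ?_, hmain⟩
    · -- continuity of g
      apply ContinuousOn.comp hfc (hcont2 x₀ hx₀J)
      intro s hs
      exact hmemG x₀ hx₀J s hs
    · -- monotonicity of g
      rcases hmono2or with hm | hm
      · left
        intro s hs t ht hst
        exact hfm (hmemG x₀ hx₀J s hs) (hmemG x₀ hx₀J t ht) (hm x₀ hx₀J hs ht hst)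
      · right
        intro s hs t ht hst
        exact hfm (hmemG x₀ hx₀J t ht) (hmemG x₀ hx₀J s hs) (hm x₀ hx₀J hs ht hst)
    · -- range condition
      intro y hy s hs
      rw [← hmain y hy s hs]
      exact ⟨G y s, hmemG y hy s hs, rfl⟩
  · -- easy direction
    rintro ⟨f, g, hfc, hfm, hgc, hgm, hrange, hmain⟩
    intro x hx s hs t ht
    have h1 : G x s ∈ J := hmemG x hx s hs
    have h2 : G x t ∈ J := hmemG x hx t ht
    have h3 : G (G x s) t ∈ J := hmemG _ h1 t ht
    have h4 : G (G x t) s ∈ J := hmemG _ h2 s hs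
    apply hfm.injOn h3 h4
    rw [hmain _ h1 t ht, hmain _ h2 s hs, hmain x hx s hs, hmain x hx t ht]
    ring
end

section
/- Suppose a solvable code G : J × J' → J has the representation G(y,r) = f⁻¹(f(y) + g(r)) with f : J → ℝ continuous and strictly increasing and g : J' → ℝ continuous and strictly monotonic. If G is differentiable in both variables with non-vanishing partial derivatives, then the functions f and g are differentiable. -/
open Set Filter


/-- Density of differentiability points of a function monotone on an interval. -/
lemma diffpt_mono {g : ℝ → ℝ} {J' : Set ℝ} (hJ' : J'.OrdConnected)
    (hgm : MonotoneOn g J') {l u : ℝ} (hl : l ∈ J') (hu : u ∈ J') (hlu : l < u) :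
    ∃ r₀ ∈ Set.Ioo l u, DifferentiableAt ℝ g r₀ := by
  have hIcc : Icc l u ⊆ J' := hJ'.out hl hu
  set c : ℝ → ℝ := fun x => max l (min u x) with hc
  have hcmem : ∀ x, c x ∈ Icc l u := fun x =>
    ⟨le_max_left _ _, max_le hlu.le (min_le_left _ _)⟩
  have hcm : Monotone c := fun x y hxy =>
    max_le_max le_rfl (min_le_min le_rfl hxy)
  have hmono : Monotone (fun x => g (c x)) := fun x y hxy =>
    hgm (hIcc (hcmem x)) (hIcc (hcmem y)) (hcm hxy)
  have hae := hmono.ae_differentiableAt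
  have hex : ∃ x ∈ Set.Ioo l u, DifferentiableAt ℝ (fun x => g (c x)) x := by
    by_contra hno
    push_neg at hno
    have hsub : Set.Ioo l u ⊆ {x | ¬ DifferentiableAt ℝ (fun x => g (c x)) x} :=
      fun x hx => hno x hx
    have h0 : MeasureTheory.volume (Set.Ioo l u) = 0 :=
      MeasureTheory.measure_mono_null hsub hae
    rw [Real.volume_Ioo] at h0
    simp only [ENNReal.ofReal_eq_zero] at h0
    linarith
  obtain ⟨r₀, hr₀, hdiff⟩ := hex
  refine ⟨r₀, hr₀, ?_⟩
  have heq : (fun x => g (c x)) =ᶠ[nhds r₀] g := by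
    filter_upwards [Ioo_mem_nhds hr₀.1 hr₀.2] with x hx
    have : c x = x := by
      rw [hc]; simp only []
      rw [min_eq_right hx.2.le, max_eq_right hx.1.le]
    rw [this]
  exact (Filter.EventuallyEq.differentiableAt_iff heq).1 hdiff

lemma diffpt {g : ℝ → ℝ} {J' : Set ℝ} (hJ' : J'.OrdConnected)
    (hgm : MonotoneOn g J' ∨ AntitoneOn g J') {l u : ℝ} (hl : l ∈ J') (hu : u ∈ J')
    (hlu : l < u) : ∃ r₀ ∈ Set.Ioo l u, DifferentiableAt ℝ g r₀ := by
  rcases hgm with hgm | hgm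
  · exact diffpt_mono hJ' hgm hl hu hlu
  · obtain ⟨r₀, hr₀, hdiff⟩ := diffpt_mono hJ' (hgm.neg) hl hu hlu
    exact ⟨r₀, hr₀, by simpa using hdiff.neg⟩

/-- Continuity of a right inverse of a strictly monotone function. -/
lemma invcont {h v : ℝ → ℝ} {J J' : Set ℝ} (hJ' : J'.OrdConnected)
    (hm : StrictMonoOn h J' ∨ StrictAntiOn h J')
    (hv : ∀ p ∈ J, v p ∈ J' ∧ h (v p) = p)
    {p : ℝ} (hp : p ∈ J) : ContinuousWithinAt v J p := by
  obtain ⟨hrJ', hhr⟩ := hv p hp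
  show Filter.Tendsto v (nhdsWithin p J) (nhds (v p))
  rw [tendsto_order]
  constructor
  · intro b hb
    by_cases hc : (J' ∩ Set.Ioo b (v p)).Nonempty
    · obtain ⟨c, hcJ', hbc, hcr⟩ := hc
      rcases hm with hm | hm
      · have hcp : h c < p := by rw [← hhr]; exact hm hcJ' hrJ' hcr
        filter_upwards [self_mem_nhdsWithin,
          (eventually_gt_nhds hcp).filter_mono nhdsWithin_le_nhds] with p' hp'J hp'gt
        by_contra hle; push_neg at hle
        have : h (v p') ≤ h c :=
          hm.monotoneOn (hv p' hp'J).1 hcJ' (hle.trans hbc.le)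
        rw [(hv p' hp'J).2] at this; linarith
      · have hcp : p < h c := by rw [← hhr]; exact hm hcJ' hrJ' hcr
        filter_upwards [self_mem_nhdsWithin,
          (eventually_lt_nhds hcp).filter_mono nhdsWithin_le_nhds] with p' hp'J hp'lt
        by_contra hle; push_neg at hle
        have : h c ≤ h (v p') :=
          hm.antitoneOn (hv p' hp'J).1 hcJ' (hle.trans hbc.le)
        rw [(hv p' hp'J).2] at this; linarith
    · filter_upwards [self_mem_nhdsWithin] with p' hp'J
      by_contra hle; push_neg at hle
      have hmem : (b + v p)/2 ∈ J' :=
        hJ'.out (hv p' hp'J).1 hrJ' ⟨by linarith, by linarith⟩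
      exact hc ⟨(b + v p)/2, hmem, by constructor <;> linarith⟩
  · intro b hb
    by_cases hc : (J' ∩ Set.Ioo (v p) b).Nonempty
    · obtain ⟨c, hcJ', hrc, hcb⟩ := hc
      rcases hm with hm | hm
      · have hcp : p < h c := by rw [← hhr]; exact hm hrJ' hcJ' hrc
        filter_upwards [self_mem_nhdsWithin,
          (eventually_lt_nhds hcp).filter_mono nhdsWithin_le_nhds] with p' hp'J hp'lt
        by_contra hge; push_neg at hge
        have : h c ≤ h (v p') :=
          hm.monotoneOn hcJ' (hv p' hp'J).1 (hcb.le.trans hge)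
        rw [(hv p' hp'J).2] at this; linarith
      · have hcp : h c < p := by rw [← hhr]; exact hm hrJ' hcJ' hrc
        filter_upwards [self_mem_nhdsWithin,
          (eventually_gt_nhds hcp).filter_mono nhdsWithin_le_nhds] with p' hp'J hp'gt
        by_contra hge; push_neg at hge
        have : h (v p') ≤ h c :=
          hm.antitoneOn hcJ' (hv p' hp'J).1 (hcb.le.trans hge)
        rw [(hv p' hp'J).2] at this; linarith
    · filter_upwards [self_mem_nhdsWithin] with p' hp'J
      by_contra hge; push_neg at hge
      have hmem : (v p + b)/2 ∈ J' :=
        hJ'.out hrJ' (hv p' hp'J).1 ⟨by linarith, by linarith⟩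
      exact hc ⟨(v p + b)/2, hmem, by constructor <;> linarith⟩

/-- Derivative of a right inverse. -/
lemma invderiv {h v : ℝ → ℝ} {J J' : Set ℝ} {r p d : ℝ}
    (hv : ∀ q ∈ J, v q ∈ J' ∧ h (v q) = q)
    (hd : HasDerivWithinAt h d J' r) (hd0 : d ≠ 0)
    (hhr : h r = p) (hpJ : p ∈ J) (hvp : v p = r)
    (hcont : ContinuousWithinAt v J p) :
    HasDerivWithinAt v d⁻¹ J p := by
  rw [hasDerivWithinAt_iff_tendsto_slope] at hd ⊢
  have hvt : Filter.Tendsto v (nhdsWithin p (J \ {p})) (nhdsWithin r (J' \ {r})) := by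
    rw [tendsto_nhdsWithin_iff]
    constructor
    · have : Filter.Tendsto v (nhdsWithin p J) (nhds r) := hvp ▸ hcont
      exact this.mono_left (nhdsWithin_mono _ diff_subset)
    · filter_upwards [self_mem_nhdsWithin] with q hq
      refine ⟨(hv q hq.1).1, fun he => hq.2 ?_⟩
      have h2 := (hv q hq.1).2
      rw [he, hhr] at h2
      exact h2 ▸ rfl
  have h1 : Filter.Tendsto (fun q => slope h r (v q)) (nhdsWithin p (J \ {p})) (nhds d) :=
    hd.comp hvt
  have h2 := h1.inv₀ hd0
  apply Filter.Tendsto.congr' ?_ h2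
  filter_upwards [self_mem_nhdsWithin] with q hq
  have hq1 : q ≠ p := fun he => hq.2 he
  have hvq := hv q hq.1
  have hvqr : v q ≠ r := fun he => hq1 (by rw [← hvq.2, he, hhr])
  rw [slope_def_field, slope_def_field, hvq.2, hhr, hvp, inv_div]

/-- Theorem (iv): if a solvable code `G(y,r) = f⁻¹(f(y) + g(r))` is differentiable in
both variables with non-vanishing derivatives, then `f` and `g` are differentiable. -/
theorem representation_differentiable
    (J J' : Set ℝ) (G : ℝ → ℝ → ℝ) (x₀ : ℝ) (f g : ℝ → ℝ)
    (hJ : NondegNonnegInterval J) (hJ' : NondegNonnegInterval J')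
    (hcode : IsCode J J' J G)
    (hS1 : SolvS1 J J' J G) (hS2 : X0Solvable J J' J G x₀)
    (hf : ContinuousOn f J) (hfm : StrictMonoOn f J)
    (hg : ContinuousOn g J') (hgm : StrictMonoOn g J' ∨ StrictAntiOn g J')
    (hrep : ∀ y ∈ J, ∀ r ∈ J', f (G y r) = f y + g r)
    (hd1 : ∀ x ∈ J, ∀ s ∈ J', ∃ d : ℝ, d ≠ 0 ∧ HasDerivWithinAt (fun u => G u s) d J x)
    (hd2 : ∀ x ∈ J, ∀ s ∈ J', ∃ d : ℝ, d ≠ 0 ∧ HasDerivWithinAt (fun u => G x u) d J' s) :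
    (∀ x ∈ J, DifferentiableWithinAt ℝ f J x) ∧
    (∀ s ∈ J', DifferentiableWithinAt ℝ g J' s) := by
  obtain ⟨hmem, hsurj, hmono1, hmono2, hc1, hc2⟩ := hcode
  obtain ⟨hx₀, hsolv⟩ := hS2
  -- the function h = G x₀ · and its inverse v
  set h : ℝ → ℝ := fun s => G x₀ s with hhdef
  have hmonoh : StrictMonoOn h J' ∨ StrictAntiOn h J' :=
    hmono2.imp (fun H => H x₀ hx₀) (fun H => H x₀ hx₀)
  have hinj : Set.InjOn h J' := hmonoh.elim (fun H => H.injOn) (fun H => H.injOn)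
  set v : ℝ → ℝ := Function.invFunOn h J' with hvdef
  have hv : ∀ p ∈ J, v p ∈ J' ∧ h (v p) = p := by
    intro p hp
    obtain ⟨s, hs, hGs⟩ := hsolv p hp
    exact ⟨Function.invFunOn_mem ⟨s, hs, hGs⟩, Function.invFunOn_eq ⟨s, hs, hGs⟩⟩
  have hvh : ∀ s ∈ J', v (h s) = s := by
    intro s hs
    have hhs : h s ∈ J := hmem x₀ hx₀ s hs
    exact hinj (hv _ hhs).1 hs (hv _ hhs).2
  have ffromg : ∀ p ∈ J, f p = f x₀ + g (v p) := by
    intro p hp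
    have := hrep x₀ hx₀ (v p) (hv p hp).1
    rw [show G x₀ (v p) = h (v p) from rfl, (hv p hp).2] at this
    exact this
  -- two distinct points of J
  obtain ⟨a, b, ha, hb, hab⟩ : ∃ a b, a ∈ J ∧ b ∈ J ∧ a < b := by
    obtain ⟨a, ha, b, hb, hne⟩ := hJ.2.1
    rcases hne.lt_or_gt with hlt | hlt
    · exact ⟨a, b, ha, hb, hlt⟩
    · exact ⟨b, a, hb, ha, hlt⟩
  have hgm' : MonotoneOn g J' ∨ AntitoneOn g J' :=
    hgm.imp (fun H => H.monotoneOn) (fun H => H.antitoneOn)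
  -- Step 1 : g is differentiable
  have gdiff : ∀ s ∈ J', DifferentiableWithinAt ℝ g J' s := by
    intro r hr
    have hp₁ : G a r ∈ J := hmem a ha r hr
    have hp₂ : G b r ∈ J := hmem b hb r hr
    have hplt : G a r < G b r := hmono1 r hr ha hb hab
    set p₁ := G a r with hp₁def
    set p₂ := G b r with hp₂def
    set q₁ := p₁ + (p₂ - p₁)/3 with hq₁def
    set q₂ := p₂ - (p₂ - p₁)/3 with hq₂def
    have hq₁₂ : q₁ < q₂ := by rw [hq₁def, hq₂def]; linarith
    have hIccJ : Set.Icc p₁ p₂ ⊆ J := hJ.1.out hp₁ hp₂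
    have hq₁J : q₁ ∈ J := hIccJ ⟨by rw [hq₁def]; linarith, by rw [hq₁def]; linarith⟩
    have hq₂J : q₂ ∈ J := hIccJ ⟨by rw [hq₂def]; linarith, by rw [hq₂def]; linarith⟩
    obtain ⟨hs₁J', hhs₁⟩ := hv q₁ hq₁J
    obtain ⟨hs₂J', hhs₂⟩ := hv q₂ hq₂J
    set s₁ := v q₁ with hs₁def
    set s₂ := v q₂ with hs₂def
    have hs12 : s₁ ≠ s₂ := by
      intro he
      rw [← hhs₁, ← hhs₂, he] at hq₁₂
      exact lt_irrefl _ hq₁₂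
    set l := min s₁ s₂ with hldef
    set u := max s₁ s₂ with hudef
    have hlu : l < u := min_lt_max.2 hs12
    have hlJ' : l ∈ J' := by
      rcases min_choice s₁ s₂ with he | he <;> rw [hldef, he] <;> assumption
    have huJ' : u ∈ J' := by
      rcases max_choice s₁ s₂ with he | he <;> rw [hudef, he] <;> assumption
    obtain ⟨r₀, hr₀mem, hgdiffAt⟩ := diffpt hJ'.1 hgm' hlJ' huJ' hlu
    have hr₀J' : r₀ ∈ J' := hJ'.1.out hlJ' huJ' ⟨hr₀mem.1.le, hr₀mem.2.le⟩
    set p₀ := h r₀ with hp₀def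
    have hp₀J : p₀ ∈ J := hmem x₀ hx₀ r₀ hr₀J'
    -- bounds on h l and h u
    have hbound : ∀ y, (y = h l ∨ y = h u) → q₁ ≤ y ∧ y ≤ q₂ := by
      intro y hy
      have hvals : y = q₁ ∨ y = q₂ := by
        rcases hy with hy | hy
        · rcases min_choice s₁ s₂ with he | he
          · exact Or.inl (by rw [hy, hldef, he, hhs₁])
          · exact Or.inr (by rw [hy, hldef, he, hhs₂])
        · rcases max_choice s₁ s₂ with he | he
          · exact Or.inl (by rw [hy, hudef, he, hhs₁])
          · exact Or.inr (by rw [hy, hudef, he, hhs₂])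
      rcases hvals with he | he <;> rw [he] <;> constructor <;> linarith
    have hp₀bnd : q₁ < p₀ ∧ p₀ < q₂ := by
      rcases hmonoh with hm | hm
      · have h1 : h l < p₀ := hm hlJ' hr₀J' hr₀mem.1
        have h2 : p₀ < h u := hm hr₀J' huJ' hr₀mem.2
        exact ⟨lt_of_le_of_lt (hbound _ (Or.inl rfl)).1 h1,
          lt_of_lt_of_le h2 (hbound _ (Or.inr rfl)).2⟩
      · have h1 : p₀ < h l := hm hlJ' hr₀J' hr₀mem.1
        have h2 : h u < p₀ := hm hr₀J' huJ' hr₀mem.2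
        exact ⟨lt_of_le_of_lt (hbound _ (Or.inr rfl)).1 h2,
          lt_of_lt_of_le h1 (hbound _ (Or.inl rfl)).2⟩
    have hp₁p₀ : p₁ < p₀ := by
      have : p₁ < q₁ := by rw [hq₁def]; linarith
      exact this.trans hp₀bnd.1
    obtain ⟨w, hw, hGw⟩ := hS1 a ha r hr p₀ hp₀J hp₁p₀
    obtain ⟨dw, hdw0, hdw⟩ := hd2 w hw r hr
    obtain ⟨d₀, hd₀0, hd₀⟩ := hd2 x₀ hx₀ r₀ hr₀J'
    have hvp₀ : v p₀ = r₀ := hvh r₀ hr₀J'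
    have hvd : HasDerivWithinAt v d₀⁻¹ J p₀ :=
      invderiv hv hd₀ hd₀0 rfl hp₀J hvp₀ (invcont hJ'.1 hmonoh hv hp₀J)
    have hvd' : HasDerivWithinAt v d₀⁻¹ J (G w r) := by rw [hGw]; exact hvd
    have hφ : HasDerivWithinAt (fun r' => v (G w r')) (d₀⁻¹ * dw) J' r := by
      have := HasDerivWithinAt.comp (s' := J) r hvd' hdw
        (fun r' hr' => hmem w hw r' hr')
      exact this
    have hφr : v (G w r) = r₀ := by rw [hGw, hvp₀]
    have hgAt : DifferentiableAt ℝ g (v (G w r)) := by rw [hφr]; exact hgdiffAt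
    have hgφ : DifferentiableWithinAt ℝ (fun r' => g (v (G w r'))) J' r := by
      have := DifferentiableAt.comp_differentiableWithinAt (f := fun r' => v (G w r'))
        r hgAt hφ.differentiableWithinAt
      exact this
    have key : ∀ r' ∈ J', g r' = g (v (G w r')) + (f x₀ - f w) := by
      intro r' hr'
      have h1 : f (G w r') = f w + g r' := hrep w hw r' hr'
      have h2 : f (G w r') = f x₀ + g (v (G w r')) := ffromg (G w r') (hmem w hw r' hr')
      linarith
    exact ((hgφ.add_const (f x₀ - f w)).congr key (key r hr))
  refine ⟨?_, gdiff⟩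
  -- Step 2 : f is differentiable
  intro p hp
  obtain ⟨hvpJ', hhvp⟩ := hv p hp
  obtain ⟨d, hd0, hd⟩ := hd2 x₀ hx₀ (v p) hvpJ'
  have hvd : HasDerivWithinAt v d⁻¹ J p :=
    invderiv hv hd hd0 hhvp hp rfl (invcont hJ'.1 hmonoh hv hp)
  have hcomp : DifferentiableWithinAt ℝ (fun p' => f x₀ + g (v p')) J p := by
    have := DifferentiableWithinAt.comp (t := J') p (gdiff (v p) hvpJ')
      hvd.differentiableWithinAt (fun q hq => (hv q hq).1)
    exact this.const_add (f x₀)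
  exact hcomp.congr ffromg (ffromg p hp)
end

section
/- Suppose the representation G(y,r) = f⁻¹(f(y) + g(r)) holds for a code G : J × J' → J, where f : J → ℝ is continuous and strictly increasing and g : J' → ℝ is continuous and strictly monotonic. Then G(y,r) = (f*)⁻¹(f*(y) + g*(r)) also holds for continuous functions f* and g*, respectively comonotonic with f and g, if and only if f* = ξf + θ and g* = ξg for some constants ξ > 0 and θ ∈ ℝ. -/
set_option maxHeartbeats 1000000

/-- A monotone, midpoint-affine function on an ord-connected set of reals is affine. -/
lemma affine_of_midpoint {B : Set ℝ} (hB : B.OrdConnected) {β : ℝ → ℝ}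
    (hmono : ∀ b ∈ B, ∀ b' ∈ B, b ≤ b' → β b ≤ β b')
    (hmid : ∀ b ∈ B, ∀ b' ∈ B, β b + β b' = 2 * β ((b + b') / 2))
    {b0 b1 : ℝ} (hb0 : b0 ∈ B) (hb1 : b1 ∈ B) (hlt : b0 < b1) :
    ∀ b ∈ B, β b = (β b1 - β b0) / (b1 - b0) * (b - b0) + β b0 := by
  set d : ℝ := b1 - b0 with hd
  have hdpos : 0 < d := by simp [hd, hlt]
  set ξ : ℝ := (β b1 - β b0) / d with hxi
  have hξd : ξ * d = β b1 - β b0 := by rw [hxi, div_mul_cancel₀ _ hdpos.ne']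
  have hξnn : 0 ≤ ξ := div_nonneg (by linarith [hmono b0 hb0 b1 hb1 hlt.le]) hdpos.le
  set h : ℝ → ℝ := fun x => β x - (ξ * (x - b0) + β b0) with hh
  have hIcc : Set.Icc b0 b1 ⊆ B := hB.out hb0 hb1
  have hh0 : h b0 = 0 := by simp [hh]
  have hh1 : h b1 = 0 := by simp only [hh]; rw [← hd] at *; linarith [hξd]
  have hmid' : ∀ b ∈ B, ∀ b' ∈ B, h b + h b' = 2 * h ((b + b') / 2) := by
    intro b hb b' hb'
    have := hmid b hb b' hb'
    simp only [hh]; ring_nf; ring_nf at this; linarith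
  have memIcc : ∀ t : ℝ, 0 ≤ t → t ≤ 1 → b0 + t * d ∈ Set.Icc b0 b1 := by
    intro t h0 h1
    constructor
    · nlinarith
    · nlinarith [hd]
  have hmem : ∀ (j n : ℕ), j ≤ 2 ^ n → b0 + (j : ℝ) * (d / 2 ^ n) ∈ Set.Icc b0 b1 := by
    intro j n hjn
    have h2 : (0:ℝ) < 2 ^ n := by positivity
    have h1 : ((j : ℝ) / 2 ^ n) ≤ 1 := by
      rw [div_le_one h2]
      exact_mod_cast Nat.cast_le.mpr hjn |>.trans_eq (by push_cast; ring)
    have := memIcc ((j : ℝ) / 2 ^ n) (by positivity) h1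
    convert this using 2
    ring
  -- dyadic points
  have dyad : ∀ n : ℕ, ∀ k : ℕ, k ≤ 2 ^ n → h (b0 + (k : ℝ) * (d / 2 ^ n)) = 0 := by
    intro n
    induction n with
    | zero =>
      intro k hk
      interval_cases k
      · simpa using hh0
      · rw [show b0 + ((1:ℕ) : ℝ) * (d / 2 ^ 0) = b1 by push_cast; rw [hd]; ring]
        exact hh1
    | succ n ih =>
      intro k hk
      rcases Nat.even_or_odd k with ⟨j, hj⟩ | ⟨j, hj⟩
      · have hj' : j ≤ 2 ^ n := by omega
        have e : b0 + (k : ℝ) * (d / 2 ^ (n + 1)) = b0 + (j : ℝ) * (d / 2 ^ n) := by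
          subst hj; push_cast; ring
        rw [e]; exact ih j hj'
      · have hj' : j + 1 ≤ 2 ^ n := by omega
        have hpB := hmem j n (by omega)
        have hqB := hmem (j + 1) n hj'
        have hp := ih j (by omega)
        have hq := ih (j + 1) (by omega)
        have hm := hmid' _ (hIcc hpB) _ (hIcc hqB)
        rw [hp, hq] at hm
        have e : b0 + (k : ℝ) * (d / 2 ^ (n + 1)) =
            ((b0 + (j : ℝ) * (d / 2 ^ n)) + (b0 + ((j + 1 : ℕ) : ℝ) * (d / 2 ^ n))) / 2 := by
          subst hj; push_cast; ring
        rw [e]; linarith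
  -- zero on [b0, b1]
  have hzero : ∀ x ∈ Set.Icc b0 b1, h x = 0 := by
    intro x hx
    have hbdd : ∀ n : ℕ, |h x| ≤ ξ * d / 2 ^ n := by
      intro n
      rcases eq_or_lt_of_le hx.2 with hxe | hxlt
      · rw [hxe, hh1, abs_zero]; positivity
      · have h2 : (0:ℝ) < 2 ^ n := by positivity
        have hδpos : 0 < d / 2 ^ n := by positivity
        set k : ℕ := ⌊(x - b0) / (d / 2 ^ n)⌋₊ with hk
        have hnn : 0 ≤ (x - b0) / (d / 2 ^ n) :=
          div_nonneg (by linarith [hx.1]) hδpos.le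
        have hk1 : (k : ℝ) ≤ (x - b0) / (d / 2 ^ n) := Nat.floor_le hnn
        have hk2 : (x - b0) / (d / 2 ^ n) < (k : ℝ) + 1 := Nat.lt_floor_add_one _
        have hklt : k < 2 ^ n := by
          rw [hk, Nat.floor_lt hnn]
          rw [div_lt_iff₀ hδpos]
          push_cast
          calc x - b0 < d := by rw [hd]; linarith
            _ = 2 ^ n * (d / 2 ^ n) := by field_simp
        have hpB := hmem k n hklt.le
        have hqB := hmem (k + 1) n hklt
        have hp := dyad n k hklt.le
        have hq := dyad n (k + 1) hklt
        have hpx : b0 + (k : ℝ) * (d / 2 ^ n) ≤ x := by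
          have := (le_div_iff₀ hδpos).mp hk1
          linarith
        have hxq : x ≤ b0 + ((k + 1 : ℕ) : ℝ) * (d / 2 ^ n) := by
          push_cast
          have := (div_lt_iff₀ hδpos).mp hk2
          linarith
        have hβp := hmono _ (hIcc hpB) x (hIcc hx) hpx
        have hβq := hmono x (hIcc hx) _ (hIcc hqB) hxq
        simp only [hh] at hp hq ⊢
        push_cast at hp hq hβp hβq hpx hxq
        have e1 : ξ * (x - b0) ≤ ξ * (((k:ℝ) + 1) * (d / 2 ^ n)) :=
          mul_le_mul_of_nonneg_left (by linarith) hξnn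
        have e2 : ξ * ((k:ℝ) * (d / 2 ^ n)) ≤ ξ * (x - b0) :=
          mul_le_mul_of_nonneg_left (by linarith) hξnn
        have hp' : β (b0 + (k:ℝ) * (d / 2 ^ n)) = ξ * ((k:ℝ) * (d / 2 ^ n)) + β b0 := by
          have er : ξ * (b0 + (k:ℝ) * (d / 2 ^ n) - b0) = ξ * ((k:ℝ) * (d / 2 ^ n)) := by ring
          linarith [er]
        have hq' : β (b0 + ((k:ℝ) + 1) * (d / 2 ^ n)) =
            ξ * (((k:ℝ) + 1) * (d / 2 ^ n)) + β b0 := by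
          have er : ξ * (b0 + ((k:ℝ) + 1) * (d / 2 ^ n) - b0) =
              ξ * (((k:ℝ) + 1) * (d / 2 ^ n)) := by ring
          linarith [er]
        have e5 : ξ * (((k:ℝ) + 1) * (d / 2 ^ n)) =
            ξ * ((k:ℝ) * (d / 2 ^ n)) + ξ * (d / 2 ^ n) := by ring
        have e6 : ξ * (d / 2 ^ n) = ξ * d / 2 ^ n := by ring
        rw [abs_le]
        constructor <;> linarith [e1, e2, e5, e6, hp', hq', hβp, hβq]
    rcases eq_or_ne (h x) 0 with he | he
    · exact he
    · exfalso
      have habs : 0 < |h x| := abs_pos.mpr he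
      obtain ⟨n, hn⟩ := pow_unbounded_of_one_lt (ξ * d / |h x|) (by norm_num : (1:ℝ) < 2)
      have : ξ * d / 2 ^ n < |h x| := by
        rw [div_lt_iff₀ (by positivity : (0:ℝ) < 2 ^ n)]
        rw [div_lt_iff₀ habs] at hn
        nlinarith
      exact absurd (hbdd n) (not_le.mpr this)
  -- halving from a zero anchor
  have halve : ∀ e ∈ B, h e = 0 → ∀ b ∈ B, ∀ n : ℕ,
      (∀ t ∈ Set.uIcc e b, t ∈ B) → h b = 2 ^ n * h (e + (b - e) / 2 ^ n) := by
    intro e heB he0 b hbB n hseg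
    induction n with
    | zero => simp
    | succ n ihn =>
      have h1pow : (1:ℝ) ≤ 2 ^ n := one_le_pow₀ (by norm_num : (1:ℝ) ≤ 2)
      have hcmem : e + (b - e) / 2 ^ n ∈ Set.uIcc e b := by
        rcases le_total e b with hle | hle
        · rw [Set.uIcc_of_le hle]
          have h0 : 0 ≤ (b - e) / 2 ^ n := div_nonneg (by linarith) (by positivity)
          have h1 : (b - e) / 2 ^ n ≤ b - e := div_le_self (by linarith) h1pow
          exact ⟨by linarith, by linarith⟩
        · rw [Set.uIcc_of_ge hle]
          have h1 : (e - b) / 2 ^ n ≤ e - b := div_le_self (by linarith) h1pow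
          have h0 : (b - e) / 2 ^ n ≤ 0 :=
            div_nonpos_of_nonpos_of_nonneg (by linarith) (by positivity)
          have e3 : (b - e) / 2 ^ n = -((e - b) / 2 ^ n) := by ring
          exact ⟨by rw [e3]; linarith, by linarith⟩
      have hcB : e + (b - e) / 2 ^ n ∈ B := hseg _ hcmem
      have hm := hmid' _ hcB e heB
      rw [he0] at hm
      have e2 : (e + (b - e) / 2 ^ n + e) / 2 = e + (b - e) / 2 ^ (n + 1) := by
        rw [pow_succ]; ring
      rw [e2] at hm
      have hc2 : h (e + (b - e) / 2 ^ n) = 2 * h (e + (b - e) / 2 ^ (n + 1)) := by linarith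
      rw [ihn, hc2, pow_succ]; ring
  -- conclusion
  intro b hbB
  have key : h b = 0 → β b = ξ * (b - b0) + β b0 := by
    intro hb0'
    simp only [hh] at hb0'
    linarith
  apply key
  rcases le_or_gt b b1 with hble | hbgt
  · rcases le_or_gt b0 b with hbge | hblt
    · exact hzero b ⟨hbge, hble⟩
    · obtain ⟨n, hn⟩ := pow_unbounded_of_one_lt ((b1 - b) / d) (by norm_num : (1:ℝ) < 2)
      have hseg : ∀ t ∈ Set.uIcc b1 b, t ∈ B := by
        intro t ht
        rw [Set.uIcc_of_ge (by linarith : b ≤ b1)] at ht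
        exact hB.out hbB hb1 ht
      have hkey := halve b1 hb1 hh1 b hbB n hseg
      have hcn : b1 + (b - b1) / 2 ^ n ∈ Set.Icc b0 b1 := by
        have h2 : (0:ℝ) < 2 ^ n := by positivity
        constructor
        · have hlt' : (b1 - b) / 2 ^ n < d := by
            rw [div_lt_iff₀ h2]
            rw [div_lt_iff₀ hdpos] at hn
            nlinarith
          have e3 : (b - b1) / 2 ^ n = -((b1 - b) / 2 ^ n) := by ring
          rw [e3]; linarith
        · have : (b - b1) / 2 ^ n ≤ 0 :=
            div_nonpos_of_nonpos_of_nonneg (by linarith) h2.le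
          linarith
      rw [hkey, hzero _ hcn]; ring
  · obtain ⟨n, hn⟩ := pow_unbounded_of_one_lt ((b - b0) / d) (by norm_num : (1:ℝ) < 2)
    have hseg : ∀ t ∈ Set.uIcc b0 b, t ∈ B := by
      intro t ht
      rw [Set.uIcc_of_le (by linarith : b0 ≤ b)] at ht
      exact hB.out hb0 hbB ht
    have hkey := halve b0 hb0 hh0 b hbB n hseg
    have hcn : b0 + (b - b0) / 2 ^ n ∈ Set.Icc b0 b1 := by
      have h2 : (0:ℝ) < 2 ^ n := by positivity
      constructor
      · have : 0 ≤ (b - b0) / 2 ^ n := div_nonneg (by linarith) h2.le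
        linarith
      · have hlt' : (b - b0) / 2 ^ n < d := by
          rw [div_lt_iff₀ h2]
          rw [div_lt_iff₀ hdpos] at hn
          nlinarith
        linarith
    rw [hkey, hzero _ hcn]; ring


/-- 1-D Helly: three ord-connected sets in ℝ that pairwise intersect have a common point. -/
lemma helly3 {s t u : Set ℝ} (hs : s.OrdConnected) (ht : t.OrdConnected)
    (hu : u.OrdConnected) (hst : (s ∩ t).Nonempty) (htu : (t ∩ u).Nonempty)
    (hsu : (s ∩ u).Nonempty) : (s ∩ t ∩ u).Nonempty := by
  obtain ⟨a, has, hat⟩ := hst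
  obtain ⟨b, hbt, hbu⟩ := htu
  obtain ⟨c, hcs, hcu⟩ := hsu
  rcases le_total a b with hab | hab <;> rcases le_total b c with hbc | hbc <;>
    rcases le_total a c with hac | hac
  · exact ⟨b, ⟨hs.out has hcs ⟨hab, hbc⟩, hbt⟩, hbu⟩
  · exact ⟨b, ⟨hs.out has hcs ⟨hab, hbc⟩, hbt⟩, hbu⟩
  · exact ⟨c, ⟨hcs, ht.out hat hbt ⟨hac, hbc⟩⟩, hcu⟩
  · exact ⟨a, ⟨has, hat⟩, hu.out hcu hbu ⟨hac, hab⟩⟩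
  · exact ⟨a, ⟨has, hat⟩, hu.out hbu hcu ⟨hab, hac⟩⟩
  · exact ⟨c, ⟨hcs, ht.out hbt hat ⟨hbc, hac⟩⟩, hcu⟩
  · exact ⟨c, ⟨hcs, ht.out hat hbt ⟨hac, hbc⟩⟩, hcu⟩
  · exact ⟨b, ⟨hs.out hcs has ⟨hbc, hab⟩, hbt⟩, hbu⟩


theorem representation_uniqueness'
    (J J' : Set ℝ) (G : ℝ → ℝ → ℝ) (f g fs gs : ℝ → ℝ)
    (hJ : J.OrdConnected ∧ (∃ a ∈ J, ∃ b ∈ J, a ≠ b) ∧ ∀ x ∈ J, 0 ≤ x)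
    (hJ' : J'.OrdConnected ∧ (∃ a ∈ J', ∃ b ∈ J', a ≠ b) ∧ ∀ x ∈ J', 0 ≤ x)
    (hGmem : ∀ x ∈ J, ∀ s ∈ J', G x s ∈ J)
    (hGsurj : ∀ p ∈ J, ∃ x ∈ J, ∃ s ∈ J', G x s = p)
    (hf : ContinuousOn f J) (hfm : StrictMonoOn f J)
    (hg : ContinuousOn g J') (hgm : StrictMonoOn g J' ∨ StrictAntiOn g J')
    (hrep : ∀ y ∈ J, ∀ r ∈ J', f (G y r) = f y + g r)
    (hfscom : ∀ x ∈ J, ∀ y ∈ J, (f x ≤ f y ↔ fs x ≤ fs y))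
    (hgscom : ∀ s ∈ J', ∀ t ∈ J', (g s ≤ g t ↔ gs s ≤ gs t))
    (hreps : ∀ y ∈ J, ∀ r ∈ J', fs (G y r) = fs y + gs r) :
    ∃ ξ θ : ℝ, 0 < ξ ∧ (∀ x ∈ J, fs x = ξ * f x + θ) ∧
        (∀ r ∈ J', gs r = ξ * g r) := by
  classical
  obtain ⟨hJo, ⟨y1, hy1, y2, hy2, hyne⟩, -⟩ := hJ
  obtain ⟨hJ'o, ⟨s1, hs1, s2, hs2, hsne⟩, -⟩ := hJ'
  set A : Set ℝ := f '' J with hA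
  set B : Set ℝ := g '' J' with hB
  have hAo : A.OrdConnected := (hJo.isPreconnected.image f hf).ordConnected
  have hBo : B.OrdConnected := (hJ'o.isPreconnected.image g hg).ordConnected
  set α : ℝ → ℝ := fun a => fs (Function.invFunOn f J a) with hα
  set β : ℝ → ℝ := fun b => gs (Function.invFunOn g J' b) with hβ
  have hfeq : ∀ x ∈ J, ∀ y ∈ J, f x = f y → fs x = fs y := fun x hx y hy hxy =>
    le_antisymm ((hfscom x hx y hy).1 hxy.le) ((hfscom y hy x hx).1 hxy.ge)
  have hgeq : ∀ s ∈ J', ∀ t ∈ J', g s = g t → gs s = gs t := fun x hx y hy hxy =>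
    le_antisymm ((hgscom x hx y hy).1 hxy.le) ((hgscom y hy x hx).1 hxy.ge)
  have hαf : ∀ y ∈ J, α (f y) = fs y := fun y hy =>
    hfeq _ (Function.invFunOn_apply_mem hy) y hy (Function.invFunOn_apply_eq hy)
  have hβg : ∀ r ∈ J', β (g r) = gs r := fun r hr =>
    hgeq _ (Function.invFunOn_apply_mem hr) r hr (Function.invFunOn_apply_eq hr)
  have hmemA : ∀ y ∈ J, f y ∈ A := fun y hy => ⟨y, hy, rfl⟩
  have hmemB : ∀ r ∈ J', g r ∈ B := fun r hr => ⟨r, hr, rfl⟩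
  -- the key Pexider-type equation on images
  have key1 : ∀ a ∈ A, ∀ b ∈ B, a + b ∈ A ∧ α (a + b) = α a + β b := by
    rintro _ ⟨y, hy, rfl⟩ _ ⟨r, hr, rfl⟩
    have hG : G y r ∈ J := hGmem y hy r hr
    have h1 : f (G y r) = f y + g r := hrep y hy r hr
    refine ⟨⟨G y r, hG, h1⟩, ?_⟩
    rw [← h1, hαf _ hG, hαf y hy, hβg r hr]
    exact hreps y hy r hr
  have key2 : ∀ a ∈ A, ∃ a' ∈ A, ∃ b ∈ B, a = a' + b := by
    rintro _ ⟨p, hp, rfl⟩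
    obtain ⟨x, hx, s, hs, hGxs⟩ := hGsurj p hp
    exact ⟨f x, hmemA x hx, g s, hmemB s hs, by rw [← hGxs, hrep x hx s hs]⟩
  have hβmono : ∀ b ∈ B, ∀ b' ∈ B, b ≤ b' → β b ≤ β b' := by
    rintro _ ⟨s, hs, rfl⟩ _ ⟨t, ht, rfl⟩ hle
    rw [hβg s hs, hβg t ht]
    exact (hgscom s hs t ht).1 hle
  have hβsm : ∀ b ∈ B, ∀ b' ∈ B, b < b' → β b < β b' := by
    rintro _ ⟨s, hs, rfl⟩ _ ⟨t, ht, rfl⟩ hlt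
    rw [hβg s hs, hβg t ht]
    by_contra hc
    exact absurd ((hgscom t ht s hs).2 (not_lt.mp hc)) (not_le.mpr hlt)
  have a0A : f y1 ∈ A := hmemA y1 hy1
  have hβmid : ∀ b ∈ B, ∀ b' ∈ B, β b + β b' = 2 * β ((b + b') / 2) := by
    intro b hb b' hb'
    have hmB : (b + b') / 2 ∈ B := by
      rcases le_total b b' with hle | hle
      · exact hBo.out hb hb' ⟨by linarith, by linarith⟩
      · exact hBo.out hb' hb ⟨by linarith, by linarith⟩
    obtain ⟨h1A, e1⟩ := key1 _ a0A b hb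
    obtain ⟨h2A, e2⟩ := key1 _ h1A b' hb'
    obtain ⟨h3A, e3⟩ := key1 _ a0A _ hmB
    obtain ⟨h4A, e4⟩ := key1 _ h3A _ hmB
    have e5 : f y1 + b + b' = f y1 + (b + b') / 2 + (b + b') / 2 := by ring
    rw [e5] at e2
    linarith
  -- two distinct points of B
  have hgne : g s1 ≠ g s2 := by
    intro h
    rcases hgm with hm | hm
    · exact hsne (hm.injOn hs1 hs2 h)
    · exact hsne (hm.injOn hs1 hs2 h)
  obtain ⟨b0, hb0J, b1, hb1J, hb01⟩ :
      ∃ b0 ∈ B, ∃ b1 ∈ B, b0 < b1 := by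
    rcases lt_or_gt_of_ne hgne with h | h
    · exact ⟨g s1, hmemB s1 hs1, g s2, hmemB s2 hs2, h⟩
    · exact ⟨g s2, hmemB s2 hs2, g s1, hmemB s1 hs1, h⟩
  set ξ : ℝ := (β b1 - β b0) / (b1 - b0) with hξdef
  have hξpos : 0 < ξ :=
    div_pos (by linarith [hβsm b0 hb0J b1 hb1J hb01]) (by linarith)
  have hβaff : ∀ b ∈ B, β b = ξ * (b - b0) + β b0 :=
    affine_of_midpoint hBo hβmono hβmid hb0J hb1J hb01
  set η : ℝ := β b0 - ξ * b0 with hηdef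
  have hβaff' : ∀ b ∈ B, β b = ξ * b + η := by
    intro b hb; rw [hβaff b hb, hηdef]; ring
  -- the function a ↦ α a - ξ a is constant on A
  have hstep : ∀ w ∈ A, ∀ w' ∈ A, w ≤ w' → w' - w ≤ b1 - b0 →
      α w - ξ * w = α w' - ξ * w' := by
    intro w hw w' hw' hle hsmall
    have hS2 : Set.OrdConnected {u : ℝ | w - u ∈ B} := by
      constructor
      rintro x hx y hy z hz
      exact hBo.out hy hx ⟨by simp only [Set.mem_Icc] at hz; linarith [hz.1, hz.2],
        by simp only [Set.mem_Icc] at hz; linarith [hz.1, hz.2]⟩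
    have hS3 : Set.OrdConnected {u : ℝ | w' - u ∈ B} := by
      constructor
      rintro x hx y hy z hz
      exact hBo.out hy hx ⟨by simp only [Set.mem_Icc] at hz; linarith [hz.1, hz.2],
        by simp only [Set.mem_Icc] at hz; linarith [hz.1, hz.2]⟩
    have hn1 : (A ∩ {u : ℝ | w - u ∈ B}).Nonempty := by
      obtain ⟨a', ha', b, hb, he⟩ := key2 w hw
      exact ⟨a', ha', by simp only [Set.mem_setOf_eq, he]; simpa using hb⟩
    have hn3 : (A ∩ {u : ℝ | w' - u ∈ B}).Nonempty := by
      obtain ⟨a', ha', b, hb, he⟩ := key2 w' hw'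
      exact ⟨a', ha', by simp only [Set.mem_setOf_eq, he]; simpa using hb⟩
    have hn2 : ({u : ℝ | w - u ∈ B} ∩ {u : ℝ | w' - u ∈ B}).Nonempty := by
      refine ⟨w - b0, by simpa using hb0J, ?_⟩
      simp only [Set.mem_setOf_eq]
      have : w' - (w - b0) = b0 + (w' - w) := by ring
      rw [this]
      exact hBo.out hb0J hb1J ⟨by linarith, by linarith⟩
    obtain ⟨u, ⟨huA, huw⟩, huw'⟩ := helly3 hAo hS2 hS3 hn1 hn2 hn3
    simp only [Set.mem_setOf_eq] at huw huw'
    have h1 := (key1 u huA _ huw).2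
    have h2 := (key1 u huA _ huw').2
    rw [show u + (w - u) = w by ring] at h1
    rw [show u + (w' - u) = w' by ring] at h2
    have h3 := hβaff' _ huw
    have h4 := hβaff' _ huw'
    linarith
  have hconst : ∀ w ∈ A, ∀ w' ∈ A, α w - ξ * w = α w' - ξ * w' := by
    have main : ∀ n : ℕ, ∀ w ∈ A, ∀ w' ∈ A, w ≤ w' → w' - w ≤ n * (b1 - b0) →
        α w - ξ * w = α w' - ξ * w' := by
      intro n
      induction n with
      | zero =>
        intro w hw w' hw' hle hsm
        simp only [Nat.cast_zero, zero_mul] at hsm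
        have : w = w' := le_antisymm hle (by linarith)
        rw [this]
      | succ n ih =>
        intro w hw w' hw' hle hsm
        by_cases hc : w' - w ≤ b1 - b0
        · exact hstep w hw w' hw' hle hc
        · push_neg at hc
          have hw'' : w' - (b1 - b0) ∈ A :=
            hAo.out hw hw' ⟨by linarith, by linarith⟩
          have e1 := ih w hw _ hw'' (by linarith)
            (by push_cast at hsm ⊢; linarith)
          have e2 := hstep _ hw'' w' hw' (by linarith) (by linarith)
          linarith
    intro w hw w' hw'
    rcases le_total w w' with hle | hle
    · obtain ⟨n, hn⟩ := exists_nat_ge ((w' - w) / (b1 - b0))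
      exact main n w hw w' hw' hle (by
        rw [div_le_iff₀ (by linarith : (0:ℝ) < b1 - b0)] at hn; linarith)
    · obtain ⟨n, hn⟩ := exists_nat_ge ((w - w') / (b1 - b0))
      exact (main n w' hw' w hw hle (by
        rw [div_le_iff₀ (by linarith : (0:ℝ) < b1 - b0)] at hn; linarith)).symm
  set θ : ℝ := α (f y1) - ξ * f y1 with hθdef
  have hαaff : ∀ a ∈ A, α a = ξ * a + θ := by
    intro a ha
    have := hconst a ha _ a0A
    rw [hθdef]; linarith
  -- η = 0
  have hη0 : η = 0 := by
    obtain ⟨hsum, he⟩ := key1 _ a0A b0 hb0J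
    have e1 := hαaff _ hsum
    have e2 := hαaff _ a0A
    have e3 := hβaff' b0 hb0J
    rw [e1, e2, e3] at he
    linarith
  refine ⟨ξ, θ, hξpos, ?_, ?_⟩
  · intro x hx
    have h1 := hαf x hx
    have h2 := hαaff _ (hmemA x hx)
    linarith
  · intro r hr
    have h1 := hβg r hr
    have h2 := hβaff' _ (hmemB r hr)
    rw [hη0] at h2
    linarith

/-- Uniqueness of the additive representation: if `G(y,r) = f⁻¹(f(y) + g(r))` for a
code `G`, then continuous `f*, g*` comonotonic with `f, g` also give
`G(y,r) = (f*)⁻¹(f*(y) + g*(r))` iff `f* = ξ f + θ` and `g* = ξ g` with `ξ > 0`. -/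
theorem representation_uniqueness
    (J J' : Set ℝ) (G : ℝ → ℝ → ℝ) (f g fs gs : ℝ → ℝ)
    (hJ : NondegNonnegInterval J) (hJ' : NondegNonnegInterval J')
    (hcode : IsCode J J' J G)
    (hf : ContinuousOn f J) (hfm : StrictMonoOn f J)
    (hg : ContinuousOn g J') (hgm : StrictMonoOn g J' ∨ StrictAntiOn g J')
    (hrep : ∀ y ∈ J, ∀ r ∈ J', f (G y r) = f y + g r)
    (hfs : ContinuousOn fs J) (hgs : ContinuousOn gs J')
    (hfscom : ∀ x ∈ J, ∀ y ∈ J, (f x ≤ f y ↔ fs x ≤ fs y))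
    (hgscom : ∀ s ∈ J', ∀ t ∈ J', (g s ≤ g t ↔ gs s ≤ gs t)) :
    (∀ y ∈ J, ∀ r ∈ J', fs (G y r) = fs y + gs r) ↔
      ∃ ξ θ : ℝ, 0 < ξ ∧ (∀ x ∈ J, fs x = ξ * f x + θ) ∧
        (∀ r ∈ J', gs r = ξ * g r) := by
  constructor
  · intro hreps
    exact representation_uniqueness' J J' G f g fs gs hJ hJ' hcode.1 hcode.2.1 hf hfm hg hgm
      hrep hfscom hgscom hreps
  · rintro ⟨ξ, θ, hξ, hfs', hgs'⟩ y hy r hr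
    have hG : G y r ∈ J := hcode.1 y hy r hr
    rw [hfs' _ hG, hrep y hy r hr, hfs' y hy, hgs' r hr]
    ring
end

section
/- Fix c > 0. Suppose f : (0,∞) → ℝ is continuous and strictly monotonic and g : [0,c) → ℝ is such that f(ℓ√(1 - (v/c)²)) = f(ℓ) + g(v) for all ℓ > 0 and v ∈ [0,c). Then there exist constants ξ > 0 (or ξ ≠ 0, with ξ > 0 when f is strictly increasing) and θ ∈ ℝ such that f(ℓ) = ξ·ln(ℓ) + θ for all ℓ > 0 and g(v) = ξ·ln(√(1-(v/c)²)) for all v ∈ [0,c). -/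
/-- The additive representation of the Lorentz-FitzGerald Contraction: if `f` is
continuous and strictly monotonic on `(0,∞)` and `f(ℓ√(1-(v/c)²)) = f(ℓ) + g(v)`
for all `ℓ > 0` and `v ∈ [0,c)`, then `f(ℓ) = ξ ln ℓ + θ` and
`g(v) = ξ ln √(1-(v/c)²)` for some constants `ξ ≠ 0` (with `ξ > 0` when `f` is
strictly increasing) and `θ`. -/
theorem lorentz_fitzgerald_representation (c : ℝ) (hc : 0 < c) (f g : ℝ → ℝ)
    (hfc : ContinuousOn f (Set.Ioi (0 : ℝ)))
    (hfm : StrictMonoOn f (Set.Ioi (0 : ℝ)) ∨ StrictAntiOn f (Set.Ioi (0 : ℝ)))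
    (heq : ∀ ℓ > (0 : ℝ), ∀ v, 0 ≤ v → v < c →
      f (ℓ * Real.sqrt (1 - (v / c) ^ 2)) = f ℓ + g v) :
    ∃ ξ θ : ℝ, ξ ≠ 0 ∧ (StrictMonoOn f (Set.Ioi (0 : ℝ)) → 0 < ξ) ∧
      (∀ ℓ > (0 : ℝ), f ℓ = ξ * Real.log ℓ + θ) ∧
      (∀ v, 0 ≤ v → v < c → g v = ξ * Real.log (Real.sqrt (1 - (v / c) ^ 2))) := by
  -- Key reformulation: `f (ℓ y) = f ℓ + (f y - f 1)` for `ℓ > 0`, `y ∈ (0,1]`.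
  have key : ∀ ℓ > (0:ℝ), ∀ y : ℝ, 0 < y → y ≤ 1 → f (ℓ * y) = f ℓ + (f y - f 1) := by
    intro ℓ hℓ y hy hy1
    have h1y : (0:ℝ) ≤ 1 - y ^ 2 := by nlinarith
    set v := c * Real.sqrt (1 - y ^ 2) with hv
    have hv0 : 0 ≤ v := mul_nonneg hc.le (Real.sqrt_nonneg _)
    have hs1 : Real.sqrt (1 - y ^ 2) < 1 := by
      calc Real.sqrt (1 - y ^ 2) < Real.sqrt 1 := Real.sqrt_lt_sqrt h1y (by nlinarith)
        _ = 1 := Real.sqrt_one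
    have hvc : v < c := by
      calc v < c * 1 := by exact (mul_lt_mul_iff_right₀ hc).mpr hs1
        _ = c := mul_one c
    have hsq : Real.sqrt (1 - (v / c) ^ 2) = y := by
      have : (v / c) ^ 2 = 1 - y ^ 2 := by
        rw [hv, mul_div_cancel_left₀ _ hc.ne']
        exact Real.sq_sqrt h1y
      rw [this]
      simp only [sub_sub_cancel]
      exact Real.sqrt_sq hy.le
    have e1 := heq ℓ hℓ v hv0 hvc
    have e2 := heq 1 one_pos v hv0 hvc
    rw [hsq] at e1 e2
    rw [one_mul] at e2
    rw [e1, e2]; ring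
  -- Additive function on the half-line
  have hFpos : ∀ s t : ℝ, 0 ≤ s → 0 ≤ t →
      f (Real.exp (-(s + t))) - f 1 =
      (f (Real.exp (-s)) - f 1) + (f (Real.exp (-t)) - f 1) := by
    intro s t hs ht
    have h := key (Real.exp (-s)) (Real.exp_pos _) (Real.exp (-t)) (Real.exp_pos _)
      (Real.exp_le_one_iff.mpr (by linarith))
    rw [← Real.exp_add] at h
    rw [show -s + -t = -(s + t) by ring] at h
    rw [h]; ring
  set F : ℝ → ℝ := fun t => if 0 ≤ t then f (Real.exp (-t)) - f 1 else f 1 - f (Real.exp t)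
    with hFdef
  have hFneg : ∀ t : ℝ, F (-t) = -F t := by
    intro t
    rcases lt_trichotomy t 0 with h | h | h
    · simp only [hFdef]
      rw [if_pos (by linarith), if_neg (by linarith)]
      ring_nf
    · simp [hFdef, h]
    · simp only [hFdef]
      rw [if_neg (by linarith), if_pos (by linarith)]
      ring_nf
  have hFadd : ∀ s t : ℝ, F (s + t) = F s + F t := by
    have base : ∀ s t : ℝ, 0 ≤ s → 0 ≤ t → F (s + t) = F s + F t := by
      intro s t hs ht
      simp only [hFdef]
      rw [if_pos hs, if_pos ht, if_pos (by linarith)]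
      exact hFpos s t hs ht
    -- first handle s ≥ 0, t arbitrary
    have half : ∀ s t : ℝ, 0 ≤ s → F (s + t) = F s + F t := by
      intro s t hs
      rcases le_or_gt 0 t with ht | ht
      · exact base s t hs ht
      · rcases le_or_gt 0 (s + t) with hst | hst
        · have := base (s + t) (-t) hst (by linarith)
          rw [show s + t + -t = s by ring] at this
          rw [hFneg] at this
          linarith
        · have hb := base (-(s + t)) s (by linarith) hs
          rw [show -(s + t) + s = -t by ring] at hb
          have h2 := hFneg (s + t)
          have h3 := hFneg t
          linarith
    intro s t
    rcases le_or_gt 0 s with hs | hs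
    · exact half s t hs
    · rcases le_or_gt 0 t with ht | ht
      · rw [add_comm, half t s ht]; ring
      · have := half (-s) (-t) (by linarith)
        rw [show -s + -t = -(s + t) by ring, hFneg, hFneg, hFneg] at this
        linarith
  -- Continuity of F
  have hc1 : Continuous fun t : ℝ => f (Real.exp (-t)) :=
    hfc.comp_continuous (Real.continuous_exp.comp continuous_neg)
      (fun x => Set.mem_Ioi.mpr (Real.exp_pos _))
  have hc2 : Continuous fun t : ℝ => f (Real.exp t) :=
    hfc.comp_continuous Real.continuous_exp (fun x => Set.mem_Ioi.mpr (Real.exp_pos _))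
  have hFcont : Continuous F := by
    rw [hFdef]
    apply Continuous.if_le (hc1.sub continuous_const) (continuous_const.sub hc2)
      continuous_const continuous_id
    intro x hx
    have hx0 : x = 0 := by simpa using hx.symm
    subst hx0
    norm_num
  -- F is linear
  set FH : ℝ →+ ℝ :=
    { toFun := F
      map_zero' := by show F 0 = 0; rw [hFdef]; norm_num
      map_add' := hFadd } with hFH
  have hlin : ∀ t : ℝ, F t = t * F 1 := by
    intro t
    have := (FH.toRealLinearMap hFcont).map_smul t 1
    simp only [AddMonoidHom.coe_toRealLinearMap, smul_eq_mul, mul_one] at this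
    simpa [hFH] using this
  set ξ : ℝ := f 1 - f (Real.exp (-1)) with hξ
  have hF1 : F 1 = -ξ := by
    simp [hFdef, hξ]
  -- f on (0,1]
  have fsmall : ∀ y : ℝ, 0 < y → y ≤ 1 → f y = ξ * Real.log y + f 1 := by
    intro y hy hy1
    have ht : 0 ≤ -Real.log y := by
      have := Real.log_nonpos hy.le hy1
      linarith
    have := hlin (-Real.log y)
    rw [hF1] at this
    simp only [hFdef, if_pos ht, neg_neg, Real.exp_log hy] at this
    linarith [this]
  have fall : ∀ ℓ : ℝ, 0 < ℓ → f ℓ = ξ * Real.log ℓ + f 1 := by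
    intro ℓ hℓ
    rcases le_or_gt ℓ 1 with h | h
    · exact fsmall ℓ hℓ h
    · have hinv : 0 < ℓ⁻¹ := inv_pos.mpr hℓ
      have hinv1 : ℓ⁻¹ ≤ 1 := by
        rw [inv_le_one_iff₀]; right; exact h.le
      have := key ℓ hℓ ℓ⁻¹ hinv hinv1
      rw [mul_inv_cancel₀ hℓ.ne'] at this
      rw [fsmall ℓ⁻¹ hinv hinv1, Real.log_inv] at this
      linarith
  have hξne : ξ ≠ 0 := by
    have h1 : Real.exp (-1) ∈ Set.Ioi (0:ℝ) := Set.mem_Ioi.mpr (Real.exp_pos _)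
    have h2 : (1:ℝ) ∈ Set.Ioi (0:ℝ) := Set.mem_Ioi.mpr one_pos
    have hlt : Real.exp (-1) < 1 := Real.exp_lt_one_iff.mpr (by norm_num)
    rcases hfm with hm | hm
    · have := hm h1 h2 hlt
      rw [hξ]; intro h; rw [sub_eq_zero] at h; linarith
    · have := hm h1 h2 hlt
      rw [hξ]; intro h; rw [sub_eq_zero] at h; linarith
  refine ⟨ξ, f 1, hξne, ?_, fun ℓ hℓ => fall ℓ hℓ, ?_⟩
  · intro hm
    have h1 : Real.exp (-1) ∈ Set.Ioi (0:ℝ) := Set.mem_Ioi.mpr (Real.exp_pos _)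
    have h2 : (1:ℝ) ∈ Set.Ioi (0:ℝ) := Set.mem_Ioi.mpr one_pos
    have hlt : Real.exp (-1) < 1 := Real.exp_lt_one_iff.mpr (by norm_num)
    have := hm h1 h2 hlt
    rw [hξ]; linarith
  · intro v hv0 hvc
    have hvc2 : (v / c) ^ 2 < 1 := by
      have : v / c < 1 := (div_lt_one hc).mpr hvc
      have h0 : 0 ≤ v / c := div_nonneg hv0 hc.le
      nlinarith
    have hy0 : 0 < Real.sqrt (1 - (v / c) ^ 2) := Real.sqrt_pos.mpr (by linarith)
    have hy1 : Real.sqrt (1 - (v / c) ^ 2) ≤ 1 :=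
      Real.sqrt_le_one.mpr (by nlinarith)
    have e2 := heq 1 one_pos v hv0 hvc
    rw [one_mul] at e2
    rw [fsmall _ hy0 hy1] at e2
    linarith
end

section
/- Let f : (0,∞) → ℝ be strictly increasing and satisfy the functional equation f(√(x² + y²)) = f(x) + f(y) for all x,y > 0. Then there exists a constant ξ > 0 such that f(x) = ξx² for all x > 0. Moreover, with this f, the Pythagorean function P(x,y) = √(x² + y²) satisfies P(x,y) = f⁻¹(f(x) + f(y)), and P is permutable: P(P(x,y),z) = √(x²+y²+z²) = P(P(x,z),y) for all x,y,z > 0. -/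
lemma cauchy_mono_linear (h : ℝ → ℝ) (hm : StrictMonoOn h (Set.Ioi (0 : ℝ)))
    (hadd : ∀ z > (0 : ℝ), ∀ w > (0 : ℝ), h (z + w) = h z + h w) :
    ∀ z > (0 : ℝ), h z = h 1 * z := by
  have hnat : ∀ n : ℕ, ∀ z > (0 : ℝ), h (((n : ℝ) + 1) * z) = ((n : ℝ) + 1) * h z := by
    intro n
    induction n with
    | zero => intro z hz; simp
    | succ n ih =>
      intro z hz
      have h1 : ((n : ℝ) + 1 + 1) * z = ((n : ℝ) + 1) * z + z := by ring
      have h2 : ((n : ℝ) + 1) * z > 0 := by positivity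
      push_cast
      rw [h1, hadd _ h2 _ hz, ih z hz]
      ring
  have hfrac : ∀ m n : ℕ, 1 ≤ m → 1 ≤ n → h ((m : ℝ) / n) = ((m : ℝ) / n) * h 1 := by
    intro m n hm1 hn1
    have hn0 : (0 : ℝ) < n := by exact_mod_cast hn1
    have hm0 : (0 : ℝ) < m := by exact_mod_cast hm1
    have hx : (0 : ℝ) < (m : ℝ) / n := by positivity
    obtain ⟨k, rfl⟩ : ∃ k, n = k + 1 := ⟨n - 1, by omega⟩
    obtain ⟨j, rfl⟩ : ∃ j, m = j + 1 := ⟨m - 1, by omega⟩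
    have hx' : (0 : ℝ) < ((j : ℝ) + 1) / ((k : ℝ) + 1) := by positivity
    have e1 := hnat k (((j : ℝ) + 1) / ((k : ℝ) + 1)) hx'
    have e2 := hnat j 1 one_pos
    rw [mul_one] at e2
    have key : ((k : ℝ) + 1) * (((j : ℝ) + 1) / ((k : ℝ) + 1)) = ((j : ℝ) + 1) := by
      field_simp
    rw [key, e2] at e1
    push_cast
    have hk0 : ((k : ℝ) + 1) ≠ 0 := by positivity
    field_simp
    linear_combination -e1
  have hc : 0 < h 1 := by
    have h2 : h 2 = h 1 + h 1 := by
      have := hadd 1 one_pos 1 one_pos; norm_num at this ⊢; linarith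
    have := hm (Set.mem_Ioi.mpr one_pos) (Set.mem_Ioi.mpr two_pos) one_lt_two
    linarith
  have hratp : ∀ q : ℚ, 0 < q → h (q : ℝ) = (q : ℝ) * h 1 := by
    intro q hq
    have hnum : (1 : ℕ) ≤ q.num.toNat := by
      have := Rat.num_pos.mpr hq; omega
    have hden : (1 : ℕ) ≤ q.den := q.pos
    have hcast : (q : ℝ) = (q.num.toNat : ℝ) / (q.den : ℝ) := by
      rw [Rat.cast_def]
      congr 1
      exact_mod_cast (Int.toNat_of_nonneg (le_of_lt (Rat.num_pos.mpr hq))).symm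
    rw [hcast]
    exact hfrac _ _ hnum hden
  intro z hz
  by_contra hne
  rcases lt_or_gt_of_ne hne with hlt | hgt
  · -- h z < h 1 * z : pick rational q with max (h z / h 1) (z/2) < q < z
    have hlt' : h z / h 1 < z := (div_lt_iff₀ hc).mpr (by linarith)
    have hmax : max (h z / h 1) (z / 2) < z := by
      apply max_lt hlt'; linarith
    obtain ⟨q, hq1, hq2⟩ := exists_rat_btwn hmax
    have hq0 : (0 : ℝ) < q := lt_of_le_of_lt (by linarith [le_max_right (h z / h 1) (z / 2)] : (0:ℝ) ≤ max (h z / h 1) (z / 2)) hq1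
    have hq0' : (0 : ℚ) < q := by exact_mod_cast hq0
    have e := hratp q hq0'
    have h1 : h (q : ℝ) < h z := hm (Set.mem_Ioi.mpr hq0) (Set.mem_Ioi.mpr hz) hq2
    have h2 : h z < (q : ℝ) * h 1 := by
      have : h z / h 1 < (q : ℝ) := lt_of_le_of_lt (le_max_left _ _) hq1
      rw [div_lt_iff₀ hc] at this; linarith
    rw [e] at h1; linarith
  · -- h 1 * z < h z : pick rational q with z < q < h z / h 1
    have hlt' : z < h z / h 1 := (lt_div_iff₀ hc).mpr (by linarith)
    obtain ⟨q, hq1, hq2⟩ := exists_rat_btwn hlt'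
    have hq0 : (0 : ℝ) < q := lt_trans hz hq1
    have hq0' : (0 : ℚ) < q := by exact_mod_cast hq0
    have e := hratp q hq0'
    have h1 : h z < h (q : ℝ) := hm (Set.mem_Ioi.mpr hz) (Set.mem_Ioi.mpr hq0) hq1
    have h2 : (q : ℝ) * h 1 < h z := by
      rw [lt_div_iff₀ hc] at hq2; linarith
    rw [e] at h1; linarith

/-- The Pythagorean function: a strictly increasing solution `f` of
`f(√(x² + y²)) = f(x) + f(y)` on `(0,∞)` has the form `f(x) = ξx²` with `ξ > 0`;
with this `f`, `P(x,y) = √(x² + y²)` satisfies `P(x,y) = f⁻¹(f(x) + f(y))` and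
`P` is permutable: `P(P(x,y),z) = √(x² + y² + z²) = P(P(x,z),y)`. -/
theorem pythagorean_representation_and_permutable (f : ℝ → ℝ)
    (hf : StrictMonoOn f (Set.Ioi (0 : ℝ)))
    (heq : ∀ x > (0 : ℝ), ∀ y > (0 : ℝ), f (Real.sqrt (x ^ 2 + y ^ 2)) = f x + f y)
    (P : ℝ → ℝ → ℝ) (hP : ∀ x > (0 : ℝ), ∀ y > (0 : ℝ), P x y = Real.sqrt (x ^ 2 + y ^ 2)) :
    (∃ ξ > (0 : ℝ), ∀ x > (0 : ℝ), f x = ξ * x ^ 2) ∧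
    (∀ x > (0 : ℝ), ∀ y > (0 : ℝ), f (P x y) = f x + f y) ∧
    (∀ x > (0 : ℝ), ∀ y > (0 : ℝ), ∀ z > (0 : ℝ),
      P (P x y) z = Real.sqrt (x ^ 2 + y ^ 2 + z ^ 2) ∧ P (P x y) z = P (P x z) y) := by
  set h : ℝ → ℝ := fun z => f (Real.sqrt z) with hhdef
  have hsq : ∀ x > (0 : ℝ), h (x ^ 2) = f x := by
    intro x hx
    simp only [hhdef, Real.sqrt_sq hx.le]
  have hmono : StrictMonoOn h (Set.Ioi (0 : ℝ)) := by
    intro a ha b hb hab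
    exact hf (Set.mem_Ioi.mpr (Real.sqrt_pos.mpr ha)) (Set.mem_Ioi.mpr (Real.sqrt_pos.mpr hb))
      (Real.sqrt_lt_sqrt (le_of_lt ha) hab)
  have hadd : ∀ z > (0 : ℝ), ∀ w > (0 : ℝ), h (z + w) = h z + h w := by
    intro z hz w hw
    have hz' : (0 : ℝ) < Real.sqrt z := Real.sqrt_pos.mpr hz
    have hw' : (0 : ℝ) < Real.sqrt w := Real.sqrt_pos.mpr hw
    have := heq _ hz' _ hw'
    rw [Real.sq_sqrt hz.le, Real.sq_sqrt hw.le] at this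
    exact this
  have hlin := cauchy_mono_linear h hmono hadd
  have hc : 0 < h 1 := by
    have h2 : h 2 = h 1 + h 1 := by
      have := hadd 1 one_pos 1 one_pos; norm_num at this ⊢; linarith
    have := hmono (Set.mem_Ioi.mpr one_pos) (Set.mem_Ioi.mpr two_pos) one_lt_two
    linarith
  refine ⟨⟨h 1, hc, ?_⟩, ?_, ?_⟩
  · intro x hx
    rw [← hsq x hx, hlin (x ^ 2) (by positivity)]
  · intro x hx y hy
    rw [hP x hx y hy]
    exact heq x hx y hy
  · intro x hx y hy z hz
    have hxy : (0 : ℝ) < Real.sqrt (x ^ 2 + y ^ 2) := Real.sqrt_pos.mpr (by positivity)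
    have hxz : (0 : ℝ) < Real.sqrt (x ^ 2 + z ^ 2) := Real.sqrt_pos.mpr (by positivity)
    have hPxy : P x y = Real.sqrt (x ^ 2 + y ^ 2) := hP x hx y hy
    have hPxz : P x z = Real.sqrt (x ^ 2 + z ^ 2) := hP x hx z hz
    have e1 : P (P x y) z = Real.sqrt (x ^ 2 + y ^ 2 + z ^ 2) := by
      rw [hPxy, hP _ hxy z hz, Real.sq_sqrt (by positivity : (0:ℝ) ≤ x ^ 2 + y ^ 2)]
    have e2 : P (P x z) y = Real.sqrt (x ^ 2 + z ^ 2 + y ^ 2) := by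
      rw [hPxz, hP _ hxz y hy, Real.sq_sqrt (by positivity : (0:ℝ) ≤ x ^ 2 + z ^ 2)]
    refine ⟨e1, ?_⟩
    rw [e1, e2]
    ring_nf
end

section
/- Fix constants K > 0, a > 0, b > 0, and define the van der Waals function T(p,v) = K(p + a/v²)(v - b) for p > 0 and v > b. Then T is not permutable: there exist p, v, r (with all iterated expressions defined) such that T(T(p,v),r) ≠ T(T(p,r),v). -/
/-- Van der Waals' Equation `T(p,v) = K(p + a/v²)(v - b)` is not permutable: there are
`p, v, r` with all iterated expressions defined such that `T(T(p,v),r) ≠ T(T(p,r),v)`. -/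
theorem van_der_waals_not_permutable (K a b : ℝ) (hK : 0 < K) (ha : 0 < a) (hb : 0 < b)
    (T : ℝ → ℝ → ℝ) (hT : ∀ p v, T p v = K * (p + a / v ^ 2) * (v - b)) :
    ∃ p v r : ℝ, 0 < p ∧ b < v ∧ b < r ∧ 0 < T p v ∧ 0 < T p r ∧
      T (T p v) r ≠ T (T p r) v := by
  have hb' : (b : ℝ) ≠ 0 := ne_of_gt hb
  refine ⟨1, 3 * b / 2, 2 * b, one_pos, by linarith, by linarith, ?_, ?_, ?_⟩
  · rw [hT]
    have h1 : (0:ℝ) < 1 + a / (3 * b / 2) ^ 2 := by positivity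
    have h2 : (0:ℝ) < 3 * b / 2 - b := by linarith
    positivity
  · rw [hT]
    have h1 : (0:ℝ) < 1 + a / (2 * b) ^ 2 := by positivity
    have h2 : (0:ℝ) < 2 * b - b := by linarith
    positivity
  · apply ne_of_gt
    rw [hT, hT, hT, hT]
    have key : K * (K * (1 + a / (3 * b / 2) ^ 2) * (3 * b / 2 - b) + a / (2 * b) ^ 2) *
          (2 * b - b) -
        K * (K * (1 + a / (2 * b) ^ 2) * (2 * b - b) + a / (3 * b / 2) ^ 2) *
          (3 * b / 2 - b) =
        K * a * (7 * K / 72 + 1 / (36 * b)) := by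
      field_simp
      ring
    nlinarith [mul_pos (mul_pos hK ha) (show (0:ℝ) < 7 * K / 72 + 1 / (36 * b) by positivity)]
end
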